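/- arXiv:2208.10579 — 2 statements merged into one kernel-verified Lean document; each statement's English description precedes it below -/
import Mathlib

section
/- Let M be a smooth k-dimensional submanifold of ℝ^{n+k} and let NM denote its normal bundle, i.e., the set of pairs (x,v) with x ∈ M and v ∈ T_xM^⊥ ⊂ ℝ^{n+k}. Then there exists an open neighborhood of the zero section of NM which is mapped diffeomorphically by γ(x,v) = x + v onto an open neighborhood of M in ℝ^{n+k}. -/
set_option linter.unusedSectionVars false
set_option linter.unusedVariables false
set_option maxHeartbeats 1000000


/- Framework: embedded submanifolds of Euclidean space (Guillemin–Pollack style),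
tangent spaces via velocity vectors of curves, local-straightening charts. -/

noncomputable section
open Set Function
open scoped RealInnerProductSpace

abbrev Euc (n : ℕ) : Type := EuclideanSpace ℝ (Fin n)

/-- Velocity vectors at `x` of smooth curves through `x` contained in `S`. -/
def tangentSet {E : Type*} [NormedAddCommGroup E] [NormedSpace ℝ E] (S : Set E) (x : E) : Set E :=
  {v | ∃ γ : ℝ → E, (∀ t, γ t ∈ S) ∧ γ 0 = x ∧ HasDerivAt γ v 0}

/-- The tangent space of a subset `S` at `x`, as a linear subspace of the ambient space. -/
def tangentSpaceOf {E : Type*} [NormedAddCommGroup E] [NormedSpace ℝ E] (S : Set E) (x : E) :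
    Submodule ℝ E := Submodule.span ℝ (tangentSet S x)

/-- `S` is a smooth embedded `k`-dimensional submanifold (without boundary):
around every point there is a smooth local straightening diffeomorphism carrying `S`
onto a `k`-dimensional linear subspace. -/
def IsSubmanifoldOfDim {E : Type*} [NormedAddCommGroup E] [NormedSpace ℝ E]
    (k : ℕ) (S : Set E) : Prop :=
  ∀ x ∈ S, ∃ (U V : Set E) (φ ψ : E → E) (K : Submodule ℝ E),
    Module.finrank ℝ K = k ∧ IsOpen U ∧ IsOpen V ∧ x ∈ U ∧
    ContDiffOn ℝ (⊤ : ℕ∞) φ U ∧ ContDiffOn ℝ (⊤ : ℕ∞) ψ V ∧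
    MapsTo φ U V ∧ MapsTo ψ V U ∧
    (∀ y ∈ U, ψ (φ y) = y) ∧ (∀ z ∈ V, φ (ψ z) = z) ∧
    S ∩ U = U ∩ φ ⁻¹' (K : Set E)

section TubeDevel
open Topology Metric
open scoped ContDiff

variable {E : Type*} [NormedAddCommGroup E] [InnerProductSpace ℝ E] [FiniteDimensional ℝ E]

lemma deriv_mem_submodule (K : Submodule ℝ E) {c : ℝ → E} {d : E}
    (hc : HasDerivAt c d 0) (hmem : ∀ᶠ t in 𝓝 (0:ℝ), c t ∈ K) : d ∈ K := by
  have hcl : IsClosed (K : Set E) := K.closed_of_finiteDimensional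
  rw [hasDerivAt_iff_tendsto_slope] at hc
  have h0 : c 0 ∈ K := hmem.self_of_nhds
  refine hcl.mem_of_tendsto hc ?_
  filter_upwards [nhdsWithin_le_nhds hmem] with t ht
  exact K.smul_mem _ (K.sub_mem ht h0)

section Chart
variable {U V : Set E} {φ ψ : E → E} {K : Submodule ℝ E} {M : Set E}

lemma hasFDerivAt_of_chart (hU : IsOpen U) (hφ : ContDiffOn ℝ (⊤:ℕ∞) φ U) {y : E} (hy : y ∈ U) :
    HasFDerivAt φ (fderiv ℝ φ y) y := by
  have := (hφ.contDiffAt (hU.mem_nhds hy)).differentiableAt (by simp)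
  exact this.hasFDerivAt

/-- chain rule identity: Dψ(φ y) ∘ Dφ(y) = id for y ∈ U -/
lemma comp_fderiv_eq_id (hU : IsOpen U) (hV : IsOpen V)
    (hφ : ContDiffOn ℝ (⊤:ℕ∞) φ U) (hψ : ContDiffOn ℝ (⊤:ℕ∞) ψ V)
    (hφUV : MapsTo φ U V) (hψφ : ∀ y ∈ U, ψ (φ y) = y) {y : E} (hy : y ∈ U) :
    (fderiv ℝ ψ (φ y)).comp (fderiv ℝ φ y) = ContinuousLinearMap.id ℝ E := by
  have hφy : HasFDerivAt φ (fderiv ℝ φ y) y := hasFDerivAt_of_chart hU hφ hy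
  have hψz : HasFDerivAt ψ (fderiv ℝ ψ (φ y)) (φ y) := hasFDerivAt_of_chart hV hψ (hφUV hy)
  have h1 : HasFDerivAt (ψ ∘ φ) ((fderiv ℝ ψ (φ y)).comp (fderiv ℝ φ y)) y := hψz.comp y hφy
  have h2 : (ψ ∘ φ) =ᶠ[𝓝 y] id := by
    filter_upwards [hU.mem_nhds hy] with w hw; exact hψφ w hw
  have h3 : HasFDerivAt (ψ ∘ φ) (ContinuousLinearMap.id ℝ E) y :=
    (h2.hasFDerivAt_iff).2 (hasFDerivAt_id y)
  exact h1.unique h3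

lemma tangent_le_map (hU : IsOpen U) (hV : IsOpen V)
    (hφ : ContDiffOn ℝ (⊤:ℕ∞) φ U) (hψ : ContDiffOn ℝ (⊤:ℕ∞) ψ V)
    (hφUV : MapsTo φ U V) (hψφ : ∀ y ∈ U, ψ (φ y) = y)
    (hMU : M ∩ U = U ∩ φ ⁻¹' (K : Set E)) {y : E} (hy : y ∈ M) (hyU : y ∈ U) :
    tangentSpaceOf M y ≤ K.map (fderiv ℝ ψ (φ y) : E →ₗ[ℝ] E) := by
  refine Submodule.span_le.2 ?_
  rintro v ⟨c, hcM, hc0, hcd⟩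
  have hφy : HasFDerivAt φ (fderiv ℝ φ y) y := hasFDerivAt_of_chart hU hφ hyU
  have hcU : ∀ᶠ t in 𝓝 (0:ℝ), c t ∈ U := by
    have : ContinuousAt c 0 := hcd.continuousAt
    have := this.preimage_mem_nhds (hU.mem_nhds (hc0 ▸ hyU))
    filter_upwards [this] with t ht; exact ht
  have hφy' : HasFDerivAt φ (fderiv ℝ φ y) (c 0) := by rw [hc0]; exact hφy
  have hder : HasDerivAt (φ ∘ c) (fderiv ℝ φ y (v)) 0 := hφy'.comp_hasDerivAt 0 hcd
  have hmem : ∀ᶠ t in 𝓝 (0:ℝ), (φ ∘ c) t ∈ K := by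
    filter_upwards [hcU] with t ht
    have : c t ∈ M ∩ U := ⟨hcM t, ht⟩
    rw [hMU] at this
    exact this.2
  have hK : fderiv ℝ φ y v ∈ K := deriv_mem_submodule K hder hmem
  refine ⟨fderiv ℝ φ y v, hK, ?_⟩
  have := comp_fderiv_eq_id hU hV hφ hψ hφUV hψφ hyU
  have := DFunLike.congr_fun this v
  simpa using this

lemma map_le_tangent (hU : IsOpen U) (hV : IsOpen V)
    (hφ : ContDiffOn ℝ (⊤:ℕ∞) φ U) (hψ : ContDiffOn ℝ (⊤:ℕ∞) ψ V)
    (hψVU : MapsTo ψ V U) (hφψ : ∀ z ∈ V, φ (ψ z) = z) (hMU : M ∩ U = U ∩ φ ⁻¹' (K : Set E))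
    {z : E} (hzV : z ∈ V) (hzK : z ∈ K) :
    K.map (fderiv ℝ ψ z : E →ₗ[ℝ] E) ≤ tangentSpaceOf M (ψ z) := by
  rintro _ ⟨kk, hkk, rfl⟩
  refine Submodule.subset_span ?_
  have hmemM : ∀ z', z' ∈ V → z' ∈ K → ψ z' ∈ M := fun z' hz'V hz'K => by
    have : ψ z' ∈ U ∩ φ ⁻¹' (K : Set E) := ⟨hψVU hz'V, by
      simp only [mem_preimage, hφψ z' hz'V]; exact hz'K⟩
    rw [← hMU] at this; exact this.1
  by_cases hk0 : kk = 0
  · exact ⟨fun _ => ψ z, fun t => hmemM z hzV hzK, rfl,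
      by simpa [hk0] using (hasDerivAt_const (0:ℝ) (ψ z))⟩
  obtain ⟨δ, hδ0, hball⟩ := Metric.isOpen_iff.1 hV z hzV
  set c₀ : ℝ := δ / (2 * ‖kk‖) with hc₀
  have hkknorm : 0 < ‖kk‖ := norm_pos_iff.2 hk0
  have hc₀0 : 0 < c₀ := div_pos hδ0 (by positivity)
  set ρ : ℝ → ℝ := fun t => c₀ * Real.arctan (t / c₀) with hρ
  have hρbound : ∀ t, |ρ t| * ‖kk‖ < δ := by
    intro t
    have h1 : |Real.arctan (t / c₀)| < Real.pi / 2 := by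
      rw [abs_lt]
      exact ⟨Real.neg_pi_div_two_lt_arctan _, Real.arctan_lt_pi_div_two _⟩
    have : |ρ t| < c₀ * (Real.pi / 2) := by
      rw [hρ]; rw [abs_mul, abs_of_pos hc₀0]
      exact (mul_lt_mul_iff_right₀ hc₀0).2 h1
    calc |ρ t| * ‖kk‖ < c₀ * (Real.pi / 2) * ‖kk‖ := by
          exact mul_lt_mul_of_pos_right this hkknorm
      _ = δ * (Real.pi / 4) := by rw [hc₀]; field_simp; ring
      _ < δ * 1 := by
          refine (mul_lt_mul_iff_right₀ hδ0).2 ?_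
          nlinarith [Real.pi_lt_d2]
      _ = δ := mul_one δ
  have hmemV : ∀ t, z + ρ t • kk ∈ V := fun t => by
    refine hball ?_
    rw [Metric.mem_ball, dist_eq_norm]
    simpa [norm_smul, abs_mul] using hρbound t
  have hρd : HasDerivAt ρ 1 0 := by
    have h1 : HasDerivAt (fun t : ℝ => t / c₀) (1 / c₀) 0 := by
      simpa using (hasDerivAt_id (0:ℝ)).div_const c₀
    have h2 : HasDerivAt (fun t : ℝ => Real.arctan (t / c₀)) (1 / (1 + (0 / c₀) ^ 2) * (1 / c₀)) 0 :=
      (Real.hasDerivAt_arctan _).comp 0 h1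
    have h3 := h2.const_mul c₀
    have h4 : c₀ * (1 / (1 + (0 / c₀) ^ 2) * (1 / c₀)) = 1 := by simp [hc₀0.ne']
    rw [h4] at h3
    exact h3
  have hρ0 : ρ 0 = 0 := by simp [hρ]
  set γc : ℝ → E := fun t => ψ (z + ρ t • kk) with hγc
  refine ⟨γc, fun t => hmemM _ (hmemV t) (K.add_mem hzK (K.smul_mem _ hkk)), by simp [hγc, hρ0], ?_⟩
  have hin : HasDerivAt (fun t => z + ρ t • kk) kk 0 := by
    have h1 : HasDerivAt (fun t => ρ t • kk) ((1:ℝ) • kk) 0 := hρd.smul_const kk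
    have h2 := h1.const_add z
    simpa using h2
  have hψz : HasFDerivAt ψ (fderiv ℝ ψ z) z := hasFDerivAt_of_chart hV hψ hzV
  have hψz' : HasFDerivAt ψ (fderiv ℝ ψ z) ((fun t => z + ρ t • kk) 0) := by
    simpa [hρ0] using hψz
  have := hψz'.comp_hasDerivAt 0 hin
  simpa [hγc, hρ0, Function.comp_def] using this
end Chart

lemma contDiff_adjoint {n : WithTop ℕ∞} [CompleteSpace E] :
    ContDiff ℝ n (fun L : E →L[ℝ] E => ContinuousLinearMap.adjoint L) := by
  have h : IsBoundedLinearMap ℝ (fun L : E →L[ℝ] E => ContinuousLinearMap.adjoint L) := by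
    refine ⟨⟨fun A B => map_add _ A B, fun c A => ?_⟩, 1, one_pos, fun L => ?_⟩
    · simpa using (ContinuousLinearMap.adjoint (𝕜 := ℝ) (E := E) (F := E)).map_smulₛₗ c A
    · simp [LinearIsometryEquiv.norm_map]
  exact h.contDiff

theorem exists_local_tube {U V : Set E} {φ ψ : E → E} {K : Submodule ℝ E} {M : Set E}
    (hU : IsOpen U) (hV : IsOpen V)
    (hφ : ContDiffOn ℝ (⊤:ℕ∞) φ U) (hψ : ContDiffOn ℝ (⊤:ℕ∞) ψ V)
    (hφUV : MapsTo φ U V) (hψVU : MapsTo ψ V U)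
    (hψφ : ∀ y ∈ U, ψ (φ y) = y) (hφψ : ∀ z ∈ V, φ (ψ z) = z)
    (hMU : M ∩ U = U ∩ φ ⁻¹' (K : Set E)) {x : E} (hxM : x ∈ M) (hxU : x ∈ U) :
    ∃ (A : Set (E × E)) (Ux : Set E) (σx : E → E × E),
      IsOpen A ∧ IsOpen Ux ∧ (x, (0:E)) ∈ A ∧ ContDiffOn ℝ (⊤:ℕ∞) σx Ux ∧
      (∀ p : E × E, p.1 ∈ M → p.2 ∈ (tangentSpaceOf M p.1)ᗮ → p ∈ A →
        (p.1 + p.2 ∈ Ux ∧ σx (p.1 + p.2) = p)) ∧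
      (∀ u ∈ Ux, ((σx u).1 ∈ M ∧ (σx u).2 ∈ (tangentSpaceOf M (σx u).1)ᗮ) ∧ σx u ∈ A ∧
        (σx u).1 + (σx u).2 = u) := by
  classical
  -- projections
  set P : E →L[ℝ] E := K.subtypeL.comp K.orthogonalProjectionOnto with hPdef
  set Q : E →L[ℝ] E := ContinuousLinearMap.id ℝ E - P with hQdef
  have hPmem : ∀ a : E, P a ∈ K := fun a => (K.orthogonalProjectionOnto a).2
  have hPK : ∀ a ∈ K, P a = a := fun a ha => Submodule.starProjection_eq_self_iff.2 ha
  have hQa : ∀ a : E, Q a = a - P a := fun a => rfl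
  have hQmem : ∀ a : E, Q a ∈ Kᗮ := fun a => by
    rw [hQa]; exact K.sub_starProjection_mem_orthogonal a
  have hPQ' : ∀ a ∈ Kᗮ, P a = 0 := fun a ha => by
    have : K.orthogonalProjectionOnto a = 0 :=
      Submodule.orthogonalProjectionOnto_apply_of_mem_orthogonal ha
    simp [hPdef, this]
  have hPQsum : ∀ a : E, P a + Q a = a := fun a => by rw [hQa]; abel
  -- basic chart points
  have hz₀K : φ x ∈ K := by
    have : x ∈ U ∩ φ ⁻¹' (K : Set E) := by rw [← hMU]; exact ⟨hxM, hxU⟩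
    exact this.2
  set z₀ : E := φ x with hz₀def
  have hz₀V : z₀ ∈ V := hφUV hxU
  have hψz₀ : ψ z₀ = x := hψφ x hxU
  -- membership in M from chart
  have hmemM : ∀ z', z' ∈ V → z' ∈ K → ψ z' ∈ M := fun z' hz'V hz'K => by
    have : ψ z' ∈ U ∩ φ ⁻¹' (K : Set E) := ⟨hψVU hz'V, by
      simp only [mem_preimage, hφψ z' hz'V]; exact hz'K⟩
    rw [← hMU] at this; exact this.1
  have hφmemK : ∀ y, y ∈ M → y ∈ U → φ y ∈ K := fun y h1 h2 => by
    have : y ∈ U ∩ φ ⁻¹' (K : Set E) := by rw [← hMU]; exact ⟨h1, h2⟩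
    exact this.2
  -- derivative identities
  have hDψφ : ∀ y ∈ U, (fderiv ℝ ψ (φ y)).comp (fderiv ℝ φ y) = ContinuousLinearMap.id ℝ E :=
    fun y hy => comp_fderiv_eq_id hU hV hφ hψ hφUV hψφ hy
  have hDφψ : ∀ z ∈ V, (fderiv ℝ φ (ψ z)).comp (fderiv ℝ ψ z) = ContinuousLinearMap.id ℝ E :=
    fun z hz => comp_fderiv_eq_id hV hU hψ hφ hψVU hφψ hz
  have hadj1 : ∀ z ∈ V, (ContinuousLinearMap.adjoint (fderiv ℝ ψ z)).comp
      (ContinuousLinearMap.adjoint (fderiv ℝ φ (ψ z))) = ContinuousLinearMap.id ℝ E := by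
    intro z hz
    rw [← ContinuousLinearMap.adjoint_comp, hDφψ z hz, ContinuousLinearMap.adjoint_id]
  have hadj2 : ∀ y ∈ U, (ContinuousLinearMap.adjoint (fderiv ℝ φ y)).comp
      (ContinuousLinearMap.adjoint (fderiv ℝ ψ (φ y))) = ContinuousLinearMap.id ℝ E := by
    intro y hy
    rw [← ContinuousLinearMap.adjoint_comp, hDψφ y hy, ContinuousLinearMap.adjoint_id]
  -- tangent space identity
  have htan : ∀ y, y ∈ M → y ∈ U → tangentSpaceOf M y = K.map (fderiv ℝ ψ (φ y) : E →ₗ[ℝ] E) := by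
    intro y h1 h2
    refine le_antisymm (tangent_le_map hU hV hφ hψ hφUV hψφ hMU h1 h2) ?_
    have := map_le_tangent hU hV hφ hψ hψVU hφψ hMU (hφUV h2) (hφmemK y h1 h2)
    rwa [hψφ y h2] at this
  -- the IFT map
  set F1 : E → E := fun a => ψ (P a) with hF1def
  set AdjM : E → E →L[ℝ] E := fun a => ContinuousLinearMap.adjoint (fderiv ℝ φ (ψ (P a)))
    with hAdjMdef
  set F2 : E → E := fun a => AdjM a (Q a) with hF2def
  set H : E → E := fun a => F1 a + F2 a with hHdef
  set Φ : E → E × E := fun a => (F1 a, F2 a) with hΦdef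
  set D : Set E := ⇑P ⁻¹' V with hDdef
  have hD : IsOpen D := hV.preimage P.continuous
  have hz₀D : z₀ ∈ D := by
    simp only [hDdef, mem_preimage, hPK z₀ hz₀K]; exact hz₀V
  have hPD : ∀ a ∈ D, P a ∈ V := fun a ha => ha
  -- smoothness
  have hF1cd : ContDiffOn ℝ (⊤:ℕ∞) F1 D :=
    hψ.comp (P.contDiff.contDiffOn) (fun a ha => ha)
  have hfderivφ : ContDiffOn ℝ (⊤:ℕ∞) (fderiv ℝ φ) U :=
    ((contDiffOn_infty_iff_fderiv_of_isOpen hU).1 hφ).2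
  have hfderivψ : ContDiffOn ℝ (⊤:ℕ∞) (fderiv ℝ ψ) V :=
    ((contDiffOn_infty_iff_fderiv_of_isOpen hV).1 hψ).2
  have hF1U : MapsTo F1 D U := fun a ha => hψVU (hPD a ha)
  have hAdjcd : ContDiffOn ℝ (⊤:ℕ∞) AdjM D := by
    have h1 : ContDiffOn ℝ (⊤:ℕ∞) (fun a => fderiv ℝ φ (ψ (P a))) D :=
      hfderivφ.comp hF1cd hF1U
    exact contDiff_adjoint.comp_contDiffOn h1
  have hF2cd : ContDiffOn ℝ (⊤:ℕ∞) F2 D := hAdjcd.clm_apply (Q.contDiff.contDiffOn)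
  have hHcd : ContDiffOn ℝ (⊤:ℕ∞) H D := hF1cd.add hF2cd
  have hΦcd : ContDiffOn ℝ (⊤:ℕ∞) Φ D := hF1cd.prodMk hF2cd
  -- derivative of H at z₀
  have hone : (1:ℕ∞) ≤ (⊤:ℕ∞) := le_top
  have hψz₀d : HasFDerivAt ψ (fderiv ℝ ψ z₀) z₀ := hasFDerivAt_of_chart hV hψ hz₀V
  have hψPz₀d : HasFDerivAt ψ (fderiv ℝ ψ z₀) (P z₀) := by rw [hPK z₀ hz₀K]; exact hψz₀d
  have hF1d : HasFDerivAt F1 ((fderiv ℝ ψ z₀).comp P) z₀ := hψPz₀d.comp z₀ P.hasFDerivAt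
  have hAdjda : DifferentiableAt ℝ AdjM z₀ :=
    (hAdjcd.contDiffAt (hD.mem_nhds hz₀D)).differentiableAt (by simp)
  have hQz₀ : Q z₀ = 0 := by
    rw [hQa, hPK z₀ hz₀K, sub_self]
  have hAdjz₀ : AdjM z₀ = ContinuousLinearMap.adjoint (fderiv ℝ φ x) := by
    simp only [hAdjMdef, hPK z₀ hz₀K, hψz₀]
  have hF2d : HasFDerivAt F2 ((ContinuousLinearMap.adjoint (fderiv ℝ φ x)).comp Q) z₀ := by
    have := hAdjda.hasFDerivAt.clm_apply Q.hasFDerivAt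
    simpa [hQz₀, hAdjz₀] using this
  set T : E →L[ℝ] E := (fderiv ℝ ψ z₀).comp P + (ContinuousLinearMap.adjoint
    (fderiv ℝ φ x)).comp Q with hTdef
  have hHd : HasFDerivAt H T z₀ := hF1d.add hF2d
  -- T injective
  have hDφDψ : (fderiv ℝ φ x).comp (fderiv ℝ ψ z₀) = ContinuousLinearMap.id ℝ E := by
    have := hDφψ z₀ hz₀V; rwa [hψz₀] at this
  have hTker : ∀ a : E, T a = 0 → a = 0 := by
    intro a ha
    set u : E := fderiv ℝ ψ z₀ (P a) with hudef
    set w : E := ContinuousLinearMap.adjoint (fderiv ℝ φ x) (Q a) with hwdef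
    have huw : u + w = 0 := by
      rw [hudef, hwdef]; simpa [hTdef] using ha
    have huT : u ∈ tangentSpaceOf M x := by
      rw [htan x hxM hxU]
      exact ⟨P a, hPmem a, rfl⟩
    have hworth : ∀ t ∈ tangentSpaceOf M x, ⟪t, w⟫ = 0 := by
      intro t ht
      rw [htan x hxM hxU] at ht
      obtain ⟨kk, hkk, rfl⟩ := ht
      rw [hwdef, ContinuousLinearMap.adjoint_inner_right]
      have : (fderiv ℝ φ x) ((fderiv ℝ ψ (φ x)) kk) = kk := by
        have := DFunLike.congr_fun hDφDψ kk
        simpa [hz₀def] using this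
      rw [ContinuousLinearMap.coe_coe, this]
      exact (Submodule.mem_orthogonal K (Q a)).1 (hQmem a) kk hkk
    have hu0 : u = 0 := by
      have h1 : ⟪u, u⟫ = 0 := by
        have : u = -w := by linear_combination (norm := abel) huw
        nth_rewrite 2 [this]
        rw [inner_neg_right, hworth u huT, neg_zero]
      exact inner_self_eq_zero.1 h1
    have hw0 : w = 0 := by
      have : w = -u := by linear_combination (norm := abel) huw
      rw [this, hu0, neg_zero]
    have hPa0 : P a = 0 := by
      have h2 := DFunLike.congr_fun hDφDψ (P a)
      simp only [ContinuousLinearMap.coe_comp', Function.comp_apply,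
        ContinuousLinearMap.coe_id', id_eq] at h2
      rw [← h2, ← hudef, hu0, map_zero]
    have hQa0 : Q a = 0 := by
      have h3 := hadj1 z₀ hz₀V
      rw [hψz₀] at h3
      have h4 := DFunLike.congr_fun h3 (Q a)
      simp only [ContinuousLinearMap.coe_comp', Function.comp_apply,
        ContinuousLinearMap.coe_id', id_eq] at h4
      rw [← h4, ← hwdef, hw0, map_zero]
    rw [← hPQsum a, hPa0, hQa0, add_zero]
  have hTinj : Function.Injective T := by
    intro a b hab
    have : T (a - b) = 0 := by rw [map_sub, hab, sub_self]
    exact sub_eq_zero.1 (hTker _ this)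
  -- T as a continuous linear equiv
  set e' : E ≃L[ℝ] E :=
    (LinearEquiv.ofInjectiveEndo (T : E →ₗ[ℝ] E) hTinj).toContinuousLinearEquiv with he'def
  have hTe : (e' : E →L[ℝ] E) = T := by ext a; rfl
  -- inverse function theorem
  have hn1 : ((⊤:ℕ∞) : WithTop ℕ∞) ≠ 0 := by simp
  have hHcdAt : ContDiffAt ℝ (⊤:ℕ∞) H z₀ := hHcd.contDiffAt (hD.mem_nhds hz₀D)
  have hHd' : HasFDerivAt H ((e' : E →L[ℝ] E)) z₀ := by rw [hTe]; exact hHd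
  set e : OpenPartialHomeomorph E E := hHcdAt.toOpenPartialHomeomorph H hHd' hn1 with hedef
  have hecoe : ⇑e = H := rfl
  have hz₀src : z₀ ∈ e.source := hHcdAt.mem_toOpenPartialHomeomorph_source hHd' hn1
  have hQ0ap : AdjM z₀ (Q z₀) = 0 := by rw [hQz₀, map_zero]
  have hHz₀ : H z₀ = x := by
    show F1 z₀ + F2 z₀ = x
    show ψ (P z₀) + AdjM z₀ (Q z₀) = x
    rw [hQ0ap, hPK z₀ hz₀K, hψz₀, add_zero]
  have hxtgt : x ∈ e.target := by
    have := hHcdAt.image_mem_toOpenPartialHomeomorph_target hHd' hn1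
    rwa [hHz₀] at this
  -- invertibility locus
  have hfderivH : ContDiffOn ℝ (⊤:ℕ∞) (fderiv ℝ H) D :=
    ((contDiffOn_infty_iff_fderiv_of_isOpen hD).1 hHcd).2
  set Inv : Set E := D ∩ (fderiv ℝ H) ⁻¹' {L : E →L[ℝ] E | IsUnit L} with hInvdef
  have hInvOpen : IsOpen Inv :=
    hfderivH.continuousOn.isOpen_inter_preimage hD Units.isOpen
  have hz₀Inv : z₀ ∈ Inv := by
    refine ⟨hz₀D, ?_⟩
    have : fderiv ℝ H z₀ = T := hHd.fderiv
    simp only [mem_preimage, mem_setOf_eq, this]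
    exact ⟨(ContinuousLinearEquiv.unitsEquiv ℝ E).symm e', by rw [← hTe]; rfl⟩
  -- the source set
  set src : Set E := e.source ∩ Inv with hsrcdef
  have hsrcOpen : IsOpen src := e.open_source.inter hInvOpen
  have hz₀src' : z₀ ∈ src := ⟨hz₀src, hz₀Inv⟩
  have hsrcD : src ⊆ D := fun a ha => ha.2.1
  -- smooth inverse at every point of the target over src
  have hsymm_cd : ∀ u ∈ e.target, e.symm u ∈ src → ContDiffAt ℝ (⊤:ℕ∞) e.symm u := by
    intro u hu hus
    obtain ⟨w', hw'⟩ := hus.2.2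
    have hfd : HasFDerivAt H ((((ContinuousLinearEquiv.unitsEquiv ℝ E) w') : E →L[ℝ] E))
        (e.symm u) := by
      have h1 : (((ContinuousLinearEquiv.unitsEquiv ℝ E) w') : E →L[ℝ] E) = fderiv ℝ H (e.symm u) := by
        rw [← hw']; rfl
      rw [h1]
      exact ((hHcd.contDiffAt (hD.mem_nhds (hsrcD hus))).differentiableAt
        (by simp)).hasFDerivAt
    exact e.contDiffAt_symm hu hfd (hHcd.contDiffAt (hD.mem_nhds (hsrcD hus)))
  -- the chart map into normal coordinates
  set Θ : E × E → E := fun p => φ p.1 + (ContinuousLinearMap.adjoint (fderiv ℝ ψ (φ p.1))) p.2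
    with hΘdef
  have hΘcont : ContinuousOn Θ (U ×ˢ univ) := by
    have h1 : ContinuousOn (fun p : E × E => φ p.1) (U ×ˢ univ) :=
      (hφ.continuousOn.comp continuous_fst.continuousOn (fun p hp => hp.1))
    have h2 : ContinuousOn (fun p : E × E =>
        ContinuousLinearMap.adjoint (fderiv ℝ ψ (φ p.1))) (U ×ˢ univ) := by
      have h3 : ContinuousOn (fun p : E × E => fderiv ℝ ψ (φ p.1)) (U ×ˢ univ) :=
        hfderivψ.continuousOn.comp h1 (fun p hp => hφUV hp.1)
      exact (contDiff_adjoint (n := (⊤:ℕ∞)).continuous).comp_continuousOn h3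
    exact h1.add (h2.clm_apply continuous_snd.continuousOn)
  -- computation C1 : points of the normal bundle over M ∩ U are parametrized by Θ
  have hC1 : ∀ p : E × E, p.1 ∈ M → p.1 ∈ U → p.2 ∈ (tangentSpaceOf M p.1)ᗮ →
      Φ (Θ p) = p ∧ H (Θ p) = p.1 + p.2 := by
    rintro ⟨y, v⟩ hyM hyU hv
    have hzK : φ y ∈ K := hφmemK y hyM hyU
    have hzV : φ y ∈ V := hφUV hyU
    have hΘp : Θ (y, v) = φ y + (ContinuousLinearMap.adjoint (fderiv ℝ ψ (φ y))) v := rfl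
    set w : E := (ContinuousLinearMap.adjoint (fderiv ℝ ψ (φ y))) v with hwdef
    have hwKo : w ∈ Kᗮ := by
      rw [Submodule.mem_orthogonal]
      intro kk hkk
      rw [hwdef, ContinuousLinearMap.adjoint_inner_right]
      have hmem : (fderiv ℝ ψ (φ y)) kk ∈ tangentSpaceOf M y := by
        have := map_le_tangent hU hV hφ hψ hψVU hφψ hMU hzV hzK ⟨kk, hkk, rfl⟩
        rwa [hψφ y hyU] at this
      exact (Submodule.mem_orthogonal _ v).1 hv _ hmem
    have hPΘ : P (Θ (y, v)) = φ y := by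
      rw [hΘp, map_add, hPK _ hzK, hPQ' w hwKo, add_zero]
    have hQΘ : Q (Θ (y, v)) = w := by
      rw [hQa, hPΘ, hΘp]; abel
    have hψPΘ : ψ (P (Θ (y, v))) = y := by rw [hPΘ]; exact hψφ y hyU
    have hAdjΘ : AdjM (Θ (y, v)) (Q (Θ (y, v))) = v := by
      show (ContinuousLinearMap.adjoint (fderiv ℝ φ (ψ (P (Θ (y, v)))))) (Q (Θ (y, v))) = v
      rw [hψPΘ, hQΘ, hwdef]
      have := DFunLike.congr_fun (hadj2 y hyU) v
      simpa using this
    constructor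
    · show (ψ (P (Θ (y, v))), AdjM (Θ (y, v)) (Q (Θ (y, v)))) = (y, v)
      rw [hψPΘ, hAdjΘ]
    · show ψ (P (Θ (y, v))) + AdjM (Θ (y, v)) (Q (Θ (y, v))) = y + v
      rw [hψPΘ, hAdjΘ]
  -- computation C2 : Φ lands in the normal bundle and Θ is a left inverse of Φ
  have hC2 : ∀ a ∈ D, (ψ (P a) ∈ M ∧ ψ (P a) ∈ U) ∧
      (AdjM a (Q a) ∈ (tangentSpaceOf M (ψ (P a)))ᗮ) ∧ Θ (Φ a) = a := by
    intro a haD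
    have hPaV : P a ∈ V := haD
    have hPaK : P a ∈ K := hPmem a
    have hyM : ψ (P a) ∈ M := hmemM _ hPaV hPaK
    have hyU : ψ (P a) ∈ U := hψVU hPaV
    have hφy : φ (ψ (P a)) = P a := hφψ _ hPaV
    refine ⟨⟨hyM, hyU⟩, ?_, ?_⟩
    · rw [Submodule.mem_orthogonal]
      intro t ht
      rw [htan _ hyM hyU, hφy] at ht
      obtain ⟨kk, hkk, rfl⟩ := ht
      show ⟪(fderiv ℝ ψ (P a)) kk,
        (ContinuousLinearMap.adjoint (fderiv ℝ φ (ψ (P a)))) (Q a)⟫ = 0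
      rw [ContinuousLinearMap.adjoint_inner_right]
      have h5 := DFunLike.congr_fun (hDφψ (P a) hPaV) kk
      simp only [ContinuousLinearMap.coe_comp', Function.comp_apply,
        ContinuousLinearMap.coe_id', id_eq] at h5
      rw [h5]
      exact (Submodule.mem_orthogonal K (Q a)).1 (hQmem a) kk hkk
    · show φ (ψ (P a)) + (ContinuousLinearMap.adjoint (fderiv ℝ ψ (φ (ψ (P a)))))
        (AdjM a (Q a)) = a
      rw [hφy]
      show P a + (ContinuousLinearMap.adjoint (fderiv ℝ ψ (P a)))
        ((ContinuousLinearMap.adjoint (fderiv ℝ φ (ψ (P a)))) (Q a)) = a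
      have h6 := DFunLike.congr_fun (hadj1 (P a) hPaV) (Q a)
      simp only [ContinuousLinearMap.coe_comp', Function.comp_apply,
        ContinuousLinearMap.coe_id', id_eq] at h6
      rw [h6]
      exact hPQsum a
  -- assemble
  set A : Set (E × E) := (U ×ˢ univ) ∩ Θ ⁻¹' src with hAdef
  set Ux : Set E := e.target ∩ e.symm ⁻¹' src with hUxdef
  set σx : E → E × E := fun u => Φ (e.symm u) with hσdef
  have hAopen : IsOpen A := hΘcont.isOpen_inter_preimage (hU.prod isOpen_univ) hsrcOpen
  have hUxopen : IsOpen Ux := e.isOpen_inter_preimage_symm hsrcOpen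
  refine ⟨A, Ux, σx, hAopen, hUxopen, ?_, ?_, ?_, ?_⟩
  · -- (x, 0) ∈ A
    refine ⟨⟨hxU, mem_univ _⟩, ?_⟩
    have : Θ (x, (0:E)) = z₀ := by
      show φ x + (ContinuousLinearMap.adjoint (fderiv ℝ ψ (φ x))) 0 = z₀
      rw [map_zero, add_zero]
    simp only [mem_preimage, this]
    exact hz₀src'
  · -- smoothness of σx on Ux
    intro u hu
    have ha_src : e.symm u ∈ src := hu.2
    have hΦAt : ContDiffAt ℝ (⊤:ℕ∞) Φ (e.symm u) := hΦcd.contDiffAt (hD.mem_nhds (hsrcD ha_src))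
    have hsAt : ContDiffAt ℝ (⊤:ℕ∞) e.symm u := hsymm_cd u hu.1 ha_src
    exact (hΦAt.comp u hsAt).contDiffWithinAt
  · -- γ maps NB ∩ A into Ux with left inverse σx
    rintro p hpM hpv hpA
    have hp1 : p.1 ∈ U := hpA.1.1
    have hΘsrc : Θ p ∈ src := hpA.2
    obtain ⟨hc1, hc2⟩ := hC1 p hpM hp1 hpv
    have hesum : e (Θ p) = p.1 + p.2 := by rw [hecoe]; exact hc2
    have htgt : p.1 + p.2 ∈ e.target := by rw [← hesum]; exact e.map_source hΘsrc.1
    have hsymmval : e.symm (p.1 + p.2) = Θ p := by rw [← hesum]; exact e.left_inv hΘsrc.1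
    refine ⟨⟨htgt, by simp only [mem_preimage, hsymmval]; exact hΘsrc⟩, ?_⟩
    show Φ (e.symm (p.1 + p.2)) = p
    rw [hsymmval, hc1]
  · -- σx maps Ux into NB ∩ A with right inverse
    intro u hu
    have ha_src : e.symm u ∈ src := hu.2
    have haD : e.symm u ∈ D := hsrcD ha_src
    have heau : e (e.symm u) = u := e.right_inv hu.1
    have hHau : H (e.symm u) = u := by rw [← hecoe]; exact heau
    obtain ⟨⟨hyM, hyU⟩, hnorm, hΘΦ⟩ := hC2 _ haD
    have hσu : σx u = (ψ (P (e.symm u)), AdjM (e.symm u) (Q (e.symm u))) := rfl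
    refine ⟨⟨?_, ?_⟩, ⟨⟨?_, mem_univ _⟩, ?_⟩, ?_⟩
    · rw [hσu]; exact hyM
    · rw [hσu]; exact hnorm
    · rw [hσu]; exact hyU
    · simp only [mem_preimage]
      rw [hσu]
      show Θ (Φ (e.symm u)) ∈ src
      rw [hΘΦ]; exact ha_src
    · rw [hσu]
      show ψ (P (e.symm u)) + AdjM (e.symm u) (Q (e.symm u)) = u
      exact hHau

theorem tubular_general (k : ℕ) (M : Set E) (hM : IsSubmanifoldOfDim k M) :
    ∃ (O : Set (E × E)) (U : Set E) (σ : E → E × E),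
      IsOpen U ∧ M ⊆ U ∧
      (∀ p ∈ O, p.1 ∈ M ∧ p.2 ∈ (tangentSpaceOf M p.1)ᗮ) ∧
      (∃ O' : Set (E × E), IsOpen O' ∧
        O = O' ∩ {p | p.1 ∈ M ∧ p.2 ∈ (tangentSpaceOf M p.1)ᗮ}) ∧
      (∀ x ∈ M, ((x, (0 : E)) : E × E) ∈ O) ∧
      ((fun p : E × E => p.1 + p.2) '' O = U) ∧
      InjOn (fun p : E × E => p.1 + p.2) O ∧
      ContDiffOn ℝ (⊤ : ℕ∞) σ U ∧
      (∀ p ∈ O, σ (p.1 + p.2) = p) ∧ (∀ u ∈ U, σ u ∈ O ∧ (σ u).1 + (σ u).2 = u) := by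
  classical
  set NB : Set (E × E) := {p | p.1 ∈ M ∧ p.2 ∈ (tangentSpaceOf M p.1)ᗮ} with hNBdef
  -- local tubes from charts
  have hloc : ∀ x ∈ M, ∃ (A : Set (E × E)) (Ux : Set E) (σx : E → E × E),
      IsOpen A ∧ IsOpen Ux ∧ (x, (0:E)) ∈ A ∧ ContDiffOn ℝ (⊤:ℕ∞) σx Ux ∧
      (∀ p : E × E, p.1 ∈ M → p.2 ∈ (tangentSpaceOf M p.1)ᗮ → p ∈ A →
        (p.1 + p.2 ∈ Ux ∧ σx (p.1 + p.2) = p)) ∧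
      (∀ u ∈ Ux, ((σx u).1 ∈ M ∧ (σx u).2 ∈ (tangentSpaceOf M (σx u).1)ᗮ) ∧ σx u ∈ A ∧
        (σx u).1 + (σx u).2 = u) := by
    intro x hx
    obtain ⟨U, V, φ, ψ, K, _, hU, hV, hxU, hφ, hψ, hφUV, hψVU, hψφ, hφψ, hMU⟩ := hM x hx
    exact exists_local_tube hU hV hφ hψ hφUV hψVU hψφ hφψ hMU hx hxU
  choose! A Ux σx hAopen hUxopen hA0 hσcd hfwd hbwd using hloc
  -- the Lipschitz radius function
  set S : E → Set ℝ := fun y =>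
    {r : ℝ | r ∈ Icc (0:ℝ) 1 ∧ ∃ z ∈ M, closedBall y r ×ˢ closedBall (0:E) r ⊆ A z} with hSdef
  set f : E → ℝ := fun y => sSup (S y) with hfdef
  have hbdd : ∀ y, BddAbove (S y) := fun y => ⟨1, fun r hr => hr.1.2⟩
  have hSne : ∀ y ∈ M, (0:ℝ) ∈ S y := by
    intro y hy
    refine ⟨⟨le_refl 0, zero_le_one⟩, y, hy, ?_⟩
    intro p hp
    simp only [closedBall_zero, singleton_prod, image_singleton, mem_singleton_iff] at hp
    rw [hp]; exact hA0 y hy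
  have hf0 : ∀ y, 0 ≤ f y := fun y => Real.sSup_nonneg (fun r hr => hr.1.1)
  have hf1 : ∀ y, f y ≤ 1 := fun y => Real.sSup_le (fun r hr => hr.1.2) zero_le_one
  have hfpos : ∀ y ∈ M, 0 < f y := by
    intro y hy
    obtain ⟨r₀, hr₀, hball⟩ := Metric.isOpen_iff.1 (hAopen y hy) (y, 0) (hA0 y hy)
    have hlt : min (r₀/2) 1 < r₀ := lt_of_le_of_lt (min_le_left _ _) (by linarith)
    have hrS : min (r₀/2) 1 ∈ S y := by
      refine ⟨⟨le_min (by linarith) zero_le_one, min_le_right _ _⟩, y, hy, ?_⟩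
      rw [closedBall_prod_same]
      exact subset_trans (closedBall_subset_ball hlt) hball
    have h2 := le_csSup (hbdd y) hrS
    have hpos : 0 < min (r₀/2) 1 := lt_min (by linarith) one_pos
    linarith
  have hkey : ∀ x' y' : E, f y' ≤ f x' + dist x' y' := by
    intro x' y'
    refine Real.sSup_le (fun r hr => ?_) (add_nonneg (hf0 x') dist_nonneg)
    rcases le_or_gt r (dist x' y') with h | h
    · linarith [hf0 x']
    · obtain ⟨⟨hr0, hr1⟩, z, hz, hsub⟩ := hr
      have hrd : r - dist x' y' ∈ S x' := by
        have hdnn : (0:ℝ) ≤ dist x' y' := dist_nonneg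
        refine ⟨⟨by linarith, by linarith⟩, z, hz, ?_⟩
        refine subset_trans (prod_mono (closedBall_subset_closedBall' ?_)
          (closedBall_subset_closedBall (by linarith))) hsub
        rw [dist_comm]; linarith
      have := le_csSup (hbdd x') hrd
      linarith
  have hfcont : Continuous f := by
    refine (LipschitzWith.of_dist_le' (K := 1) (fun a b => ?_)).continuous
    rw [Real.dist_eq, one_mul, abs_sub_le_iff]
    constructor
    · have := hkey b a; rw [dist_comm] at this; linarith
    · linarith [hkey a b]
  -- the open neighborhood of the zero section
  set O' : Set (E × E) := {p | ‖p.2‖ < f p.1 / 4} with hO'def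
  have hO'open : IsOpen O' := by
    have : IsOpen {p : E × E | ‖p.2‖ < f p.1 / 4} :=
      isOpen_lt (continuous_snd.norm) ((hfcont.comp continuous_fst).div_const 4)
    exact this
  set O : Set (E × E) := O' ∩ NB with hOdef
  have hONB : ∀ p ∈ O, p.1 ∈ M ∧ p.2 ∈ (tangentSpaceOf M p.1)ᗮ := fun p hp => hp.2
  have hzero : ∀ x ∈ M, ((x, (0:E)) : E × E) ∈ O := by
    intro x hx
    refine ⟨?_, hx, Submodule.zero_mem _⟩
    show ‖(0:E)‖ < f x / 4
    rw [norm_zero]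
    linarith [hfpos x hx]
  -- every point of O lies in a good chart
  have hcov : ∀ p ∈ O, ∃ z ∈ M, p ∈ A z := by
    rintro ⟨y, w⟩ hp
    have hyM : y ∈ M := hp.2.1
    have hw : ‖w‖ < f y := by
      have h1 : ‖w‖ < f y / 4 := hp.1
      linarith [hf0 y]
    obtain ⟨r, hrS, hwr⟩ := exists_lt_of_lt_csSup ⟨0, hSne y hyM⟩ hw
    obtain ⟨⟨hr0, hr1⟩, z, hz, hsub⟩ := hrS
    refine ⟨z, hz, hsub ⟨?_, ?_⟩⟩
    · simp only [mem_closedBall, dist_self]; exact hr0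
    · simp only [mem_closedBall, dist_zero_right]; exact hwr.le
  -- injectivity
  have hinj : InjOn (fun p : E × E => p.1 + p.2) O := by
    rintro ⟨x, v⟩ hp ⟨y, w⟩ hq hsum
    simp only at hsum
    have hxM : x ∈ M := hp.2.1
    have hyM : y ∈ M := hq.2.1
    have hv : ‖v‖ < f x / 4 := hp.1
    have hw : ‖w‖ < f y / 4 := hq.1
    have hfx := hf0 x
    have hfxp := hfpos x hxM
    have hd : dist x y ≤ ‖v‖ + ‖w‖ := by
      rw [dist_eq_norm]
      have hxy : x - y = w - v := by
        rw [sub_eq_sub_iff_add_eq_add, hsum]; abel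
      rw [hxy]
      exact (norm_sub_le _ _).trans (by rw [add_comm])
    have hky := hkey x y
    have hdx : dist x y < (2/3) * f x := by linarith
    have hdx' : dist x y < f x := by linarith
    have hwx : ‖w‖ < f x := by linarith
    have hvx : ‖v‖ < f x := by linarith
    have hm : max (dist x y) (max ‖v‖ ‖w‖) < f x := max_lt hdx' (max_lt hvx hwx)
    obtain ⟨r, hrS, hmr⟩ := exists_lt_of_lt_csSup ⟨0, hSne x hxM⟩ hm
    obtain ⟨⟨hr0, hr1⟩, z, hz, hsub⟩ := hrS
    have hdyx : dist y x ≤ r := le_trans (by rw [dist_comm]; exact le_max_left _ _) hmr.le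
    have hvr : ‖v‖ ≤ r := le_trans (le_trans (le_max_left _ _) (le_max_right _ _)) hmr.le
    have hwr : ‖w‖ ≤ r := le_trans (le_trans (le_max_right _ _) (le_max_right _ _)) hmr.le
    have hpA : ((x, v) : E × E) ∈ A z := hsub ⟨by
      simp only [mem_closedBall, dist_self]; linarith, by
      simp only [mem_closedBall, dist_zero_right]; exact hvr⟩
    have hqA : ((y, w) : E × E) ∈ A z := hsub ⟨by
      simp only [mem_closedBall]; exact hdyx, by
      simp only [mem_closedBall, dist_zero_right]; exact hwr⟩
    have h1 := (hfwd z hz (x, v) hxM hp.2.2 hpA).2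
    have h2 := (hfwd z hz (y, w) hyM hq.2.2 hqA).2
    simp only at h1 h2
    rw [hsum] at h1
    rw [← h1, ← h2]
  -- the global tube and inverse
  set U : Set E := (fun p : E × E => p.1 + p.2) '' O with hUdef
  set σ : E → E × E := fun u =>
    if h : ∃ p, p ∈ O ∧ p.1 + p.2 = u then h.choose else (u, 0) with hσdef
  have hσspec : ∀ u ∈ U, σ u ∈ O ∧ (σ u).1 + (σ u).2 = u := by
    rintro u ⟨p, hpO, hpu⟩
    have h : ∃ q, q ∈ O ∧ q.1 + q.2 = u := ⟨p, hpO, hpu⟩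
    simp only [hσdef, dif_pos h]
    exact h.choose_spec
  have hσleft : ∀ p ∈ O, σ (p.1 + p.2) = p := by
    intro p hpO
    have hU' : p.1 + p.2 ∈ U := ⟨p, hpO, rfl⟩
    obtain ⟨hO1, hO2⟩ := hσspec _ hU'
    exact hinj hO1 hpO hO2
  -- local neighborhoods inside U on which σ agrees with a local inverse
  have hlocal : ∀ u₀ ∈ U, ∃ W : Set E, IsOpen W ∧ u₀ ∈ W ∧ W ⊆ U ∧
      ContDiffOn ℝ (⊤:ℕ∞) σ W := by
    rintro u₀ ⟨p₀, hp₀O, hp₀u⟩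
    obtain ⟨z, hzM, hp₀A⟩ := hcov p₀ hp₀O
    have hp₀M : p₀.1 ∈ M := hp₀O.2.1
    have hp₀v : p₀.2 ∈ (tangentSpaceOf M p₀.1)ᗮ := hp₀O.2.2
    obtain ⟨hp₀Ux, hp₀σ⟩ := hfwd z hzM p₀ hp₀M hp₀v hp₀A
    set W : Set E := Ux z ∩ (σx z) ⁻¹' O' with hWdef
    have hWopen : IsOpen W :=
      (hσcd z hzM).continuousOn.isOpen_inter_preimage (hUxopen z hzM) hO'open
    have hWUx : W ⊆ Ux z := fun u hu => hu.1
    have hu₀W : u₀ ∈ W := by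
      refine ⟨by rw [← hp₀u]; exact hp₀Ux, ?_⟩
      simp only [mem_preimage]
      rw [← hp₀u, hp₀σ]
      exact hp₀O.1
    have hWU : ∀ u ∈ W, σx z u ∈ O ∧ u ∈ U := by
      intro u hu
      obtain ⟨⟨hq1, hq2⟩, hqA, hqsum⟩ := hbwd z hzM u (hWUx hu)
      have hqO : σx z u ∈ O := ⟨hu.2, hq1, hq2⟩
      exact ⟨hqO, ⟨σx z u, hqO, hqsum⟩⟩
    have hEq : EqOn σ (σx z) W := by
      intro u hu
      obtain ⟨hqO, hqU⟩ := hWU u hu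
      obtain ⟨⟨hq1, hq2⟩, hqA, hqsum⟩ := hbwd z hzM u (hWUx hu)
      obtain ⟨hσO, hσsum⟩ := hσspec u hqU
      refine hinj hσO hqO ?_
      show (σ u).1 + (σ u).2 = (σx z u).1 + (σx z u).2
      rw [hσsum, hqsum]
    refine ⟨W, hWopen, hu₀W, fun u hu => (hWU u hu).2, ?_⟩
    exact (((hσcd z hzM).mono hWUx).congr hEq)
  have hUopen : IsOpen U := by
    rw [isOpen_iff_forall_mem_open]
    intro u hu
    obtain ⟨W, hWo, huW, hWU, _⟩ := hlocal u hu
    exact ⟨W, hWU, hWo, huW⟩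
  have hMU' : M ⊆ U := fun x hx => ⟨(x, 0), hzero x hx, by simp⟩
  have hσsm : ContDiffOn ℝ (⊤:ℕ∞) σ U := by
    intro u hu
    obtain ⟨W, hWo, huW, hWU, hsm⟩ := hlocal u hu
    exact ((hsm.contDiffAt (hWo.mem_nhds huW)).contDiffWithinAt)
  exact ⟨O, U, σ, hUopen, hMU', hONB, ⟨O', hO'open, rfl⟩, hzero, rfl, hinj, hσsm, hσleft, hσspec⟩

end TubeDevel

/-- **Tubular Neighborhood Theorem.** For a smooth `k`-submanifold `M ⊂ ℝ^{n+k}`, an open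
neighborhood `O` of the zero section of the normal bundle
`NM = {(x,v) | x ∈ M, v ∈ (T_xM)ᗮ}` is mapped diffeomorphically by `γ(x,v) = x + v`
onto an open neighborhood `U` of `M` in `ℝ^{n+k}`. -/
theorem tubular_neighborhood (n k : ℕ) (M : Set (Euc (n + k)))
    (hM : IsSubmanifoldOfDim k M) :
    ∃ (O : Set (Euc (n + k) × Euc (n + k))) (U : Set (Euc (n + k)))
      (σ : Euc (n + k) → Euc (n + k) × Euc (n + k)),
      IsOpen U ∧ M ⊆ U ∧
      -- O consists of points of the normal bundle
      (∀ p ∈ O, p.1 ∈ M ∧ p.2 ∈ (tangentSpaceOf M p.1)ᗮ) ∧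
      -- O is open in the normal bundle (subspace topology)
      (∃ O' : Set (Euc (n + k) × Euc (n + k)), IsOpen O' ∧
        O = O' ∩ {p | p.1 ∈ M ∧ p.2 ∈ (tangentSpaceOf M p.1)ᗮ}) ∧
      -- O contains the zero section
      (∀ x ∈ M, ((x, (0 : Euc (n + k))) : Euc (n + k) × Euc (n + k)) ∈ O) ∧
      -- γ(x,v) = x + v maps O bijectively onto U …
      ((fun p : Euc (n + k) × Euc (n + k) => p.1 + p.2) '' O = U) ∧
      InjOn (fun p : Euc (n + k) × Euc (n + k) => p.1 + p.2) O ∧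
      -- … with smooth inverse σ, so that γ|_O is a diffeomorphism onto U
      ContDiffOn ℝ (⊤ : ℕ∞) σ U ∧
      (∀ p ∈ O, σ (p.1 + p.2) = p) ∧ (∀ u ∈ U, σ u ∈ O ∧ (σ u).1 + (σ u).2 = u) := by
  exact tubular_general k M hM
end
end

section
/- Let f : M → N be a smooth map between smooth manifolds and S ⊂ N a smooth submanifold. If f is transverse to S (i.e., for every x ∈ M with f(x) ∈ S, T_{f(x)}S + im(df_x) = T_{f(x)}N), then f⁻¹(S) is a smooth submanifold of M, and if f⁻¹(S) is nonempty its codimension in M equals the codimension of S in N. -/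
/- Framework: embedded submanifolds of Euclidean space (Guillemin–Pollack style),
tangent spaces via velocity vectors of curves, local-straightening charts. -/

noncomputable section
open Set Function
open scoped RealInnerProductSpace

/-- `f` (smooth on `M`) is transverse to the submanifold `S ⊂ N`:
whenever `f x ∈ S`, `T_{f x}S + df_x(T_xM) = T_{f x}N`. -/
def TransverseOn {a b : ℕ} (f : Euc a → Euc b) (M : Set (Euc a)) (N S : Set (Euc b)) : Prop :=
  ∀ x ∈ M, f x ∈ S →
    ∀ w ∈ tangentSpaceOf N (f x), ∃ u ∈ tangentSpaceOf S (f x),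
      ∃ v ∈ tangentSpaceOf M x, w = u + fderiv ℝ f x v

namespace Transversality

open Module Submodule

variable {n p q : ℕ}

lemma hone : (1 : WithTop ℕ∞) ≤ ((⊤ : ℕ∞) : WithTop ℕ∞) := by exact_mod_cast le_top

/-- Orthogonal projection, as a map of the ambient space. -/
def projC (K : Submodule ℝ (Euc n)) : Euc n →L[ℝ] Euc n :=
  K.subtypeL.comp (orthogonalProjection K)

lemma projC_mem (K : Submodule ℝ (Euc n)) (v : Euc n) : projC K v ∈ K :=
  (orthogonalProjection K v).2

lemma projC_self {K : Submodule ℝ (Euc n)} {v : Euc n} (hv : v ∈ K) : projC K v = v := by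
  exact Submodule.starProjection_eq_self_iff.2 hv

lemma projC_zero {K : Submodule ℝ (Euc n)} {v : Euc n} (hv : v ∈ Kᗮ) : projC K v = 0 := by
  have : orthogonalProjection K v = 0 := orthogonalProjection_eq_zero_iff.2 hv
  simp [projC, this]

lemma sub_projC_mem (K : Submodule ℝ (Euc n)) (v : Euc n) : v - projC K v ∈ Kᗮ :=
  Submodule.sub_starProjection_mem_orthogonal v

/-- Key linear-algebraic membership criterion used for the straightening chart. -/
lemma key_iff (K0 KM : Submodule ℝ (Euc n)) (hle : K0 ≤ KM) (vM w : Euc n)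
    (hwW : w ∈ K0ᗮ ⊓ KM) :
    vM - projC (K0ᗮ ⊓ KM) vM + w ∈ K0 ↔ (vM ∈ KM ∧ w = 0) := by
  set W' := K0ᗮ ⊓ KM with hW'
  have hsup : K0 ⊔ W' = KM := Submodule.sup_orthogonal_inf_of_hasOrthogonalProjection hle
  have hK0W' : K0 ≤ W'ᗮ :=
    (Submodule.le_orthogonal_orthogonal K0).trans
      (Submodule.orthogonal_le (inf_le_left : W' ≤ K0ᗮ))
  constructor
  · intro h
    set kM := projC KM vM with hkM
    have hkMm : kM ∈ KM := projC_mem _ _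
    have hcM : vM - kM ∈ KMᗮ := sub_projC_mem _ _
    obtain ⟨k0, hk0, w', hw', hkMeq⟩ := Submodule.mem_sup.1 (hsup ▸ hkMm)
    have hprW : projC W' vM = w' := by
      have : vM = k0 + w' + (vM - kM) := by rw [← hkMeq]; abel
      rw [this, map_add, map_add, projC_self hw',
        projC_zero (hK0W' hk0),
        projC_zero ((Submodule.orthogonal_le (inf_le_right : W' ≤ KM)) hcM)]
      simp
    have hexpr : vM - projC W' vM + w = k0 + ((vM - kM) + w) := by
      rw [hprW, ← hkMeq]; abel
    rw [hexpr] at h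
    have hb : (vM - kM) + w ∈ K0 := by
      have := K0.sub_mem h hk0; simpa using this
    have hbo : (vM - kM) + w ∈ K0ᗮ :=
      K0ᗮ.add_mem ((Submodule.orthogonal_le hle) hcM) ((inf_le_left : W' ≤ K0ᗮ) hwW)
    have hb0 : (vM - kM) + w = 0 := by
      have := (Submodule.orthogonal_disjoint K0).le_bot ⟨hb, hbo⟩
      simpa using this
    have hwKM : w ∈ KM := (inf_le_right : W' ≤ KM) hwW
    have hwKMo : w ∈ KMᗮ := by
      have : w = -(vM - kM) := by linear_combination (norm := abel) hb0
      rw [this]; exact KMᗮ.neg_mem hcM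
    have hw0 : w = 0 := by
      have := (Submodule.orthogonal_disjoint KM).le_bot ⟨hwKM, hwKMo⟩
      simpa using this
    have hcM0 : vM - kM = 0 := by
      rw [hw0, add_zero] at hb0; exact hb0
    refine ⟨?_, hw0⟩
    have : vM = kM := by linear_combination (norm := abel) hcM0
    rw [this]; exact hkMm
  · rintro ⟨hvM, rfl⟩
    obtain ⟨k0, hk0, w', hw', hvMeq⟩ := Submodule.mem_sup.1 (hsup ▸ hvM)
    have hprW : projC W' vM = w' := by
      rw [← hvMeq, map_add, projC_self hw', projC_zero (hK0W' hk0)]; simp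
    have : vM - projC W' vM + 0 = k0 := by
      rw [hprW, ← hvMeq]; abel
    rw [this]; exact hk0

/-- If `ψ ∘ φ = id` near `x`, the derivatives compose to the identity. -/
lemma comp_fderiv_eq_id {φ : Euc p → Euc q} {ψ : Euc q → Euc p} {U : Set (Euc p)} {x : Euc p}
    {A : Euc p →L[ℝ] Euc q} {B : Euc q →L[ℝ] Euc p}
    (hU : IsOpen U) (hx : x ∈ U) (hid : ∀ y ∈ U, ψ (φ y) = y)
    (hA : HasFDerivAt φ A x) (hB : HasFDerivAt ψ B (φ x)) :
    B.comp A = ContinuousLinearMap.id ℝ (Euc p) := by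
  have h1 : HasFDerivAt (ψ ∘ φ) (B.comp A) x := hB.comp x hA
  have h2 : HasFDerivAt (ψ ∘ φ) (ContinuousLinearMap.id ℝ (Euc p)) x := by
    refine (hasFDerivAt_id x).congr_of_eventuallyEq ?_
    filter_upwards [hU.mem_nhds hx] with y hy using (hid y hy)
  exact h1.unique h2


end Transversality

namespace Transversality

open Module Submodule

variable {n p q : ℕ}

/-- A straightening chart for `S` at `x`. -/
structure Chart (n : ℕ) (S : Set (Euc n)) (x : Euc n) where
  U : Set (Euc n)
  V : Set (Euc n)
  φ : Euc n → Euc n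
  ψ : Euc n → Euc n
  K : Submodule ℝ (Euc n)
  hU : IsOpen U
  hV : IsOpen V
  hx : x ∈ U
  hφ : ContDiffOn ℝ (⊤ : ℕ∞) φ U
  hψ : ContDiffOn ℝ (⊤ : ℕ∞) ψ V
  hmφ : MapsTo φ U V
  hmψ : MapsTo ψ V U
  hlr : ∀ y ∈ U, ψ (φ y) = y
  hrl : ∀ z ∈ V, φ (ψ z) = z
  heq : S ∩ U = U ∩ φ ⁻¹' (K : Set (Euc n))

lemma exists_chart {k : ℕ} {S : Set (Euc n)} (h : IsSubmanifoldOfDim k S) {x : Euc n}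
    (hx : x ∈ S) : ∃ c : Chart n S x, finrank ℝ c.K = k := by
  obtain ⟨U, V, φ, ψ, K, h1, h2, h3, h4, h5, h6, h7, h8, h9, h10, h11⟩ := h x hx
  exact ⟨⟨U, V, φ, ψ, K, h2, h3, h4, h5, h6, h7, h8, h9, h10, h11⟩, h1⟩

namespace Chart

variable {S : Set (Euc n)} {x : Euc n} (c : Chart n S x)

def A : Euc n →L[ℝ] Euc n := fderiv ℝ c.φ x
def B : Euc n →L[ℝ] Euc n := fderiv ℝ c.ψ (c.φ x)

lemma hφV : c.φ x ∈ c.V := c.hmφ c.hx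

lemma hψφx : c.ψ (c.φ x) = x := c.hlr x c.hx

lemma hdA : HasFDerivAt c.φ c.A x :=
  ((c.hφ.contDiffAt (c.hU.mem_nhds c.hx)).differentiableAt (by simp)).hasFDerivAt

lemma hdB : HasFDerivAt c.ψ c.B (c.φ x) :=
  ((c.hψ.contDiffAt (c.hV.mem_nhds c.hφV)).differentiableAt (by simp)).hasFDerivAt

lemma hBA : c.B.comp c.A = ContinuousLinearMap.id ℝ (Euc n) :=
  comp_fderiv_eq_id c.hU c.hx c.hlr c.hdA c.hdB

lemma hAB : c.A.comp c.B = ContinuousLinearMap.id ℝ (Euc n) := by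
  refine comp_fderiv_eq_id c.hV c.hφV c.hrl c.hdB ?_
  rw [c.hψφx]; exact c.hdA

lemma hBA' (v : Euc n) : c.B (c.A v) = v := by
  have := congrArg (fun (T : Euc n →L[ℝ] Euc n) => T v) c.hBA
  simpa using this

lemma hAB' (v : Euc n) : c.A (c.B v) = v := by
  have := congrArg (fun (T : Euc n →L[ℝ] Euc n) => T v) c.hAB
  simpa using this

lemma mem_K_of_mem (hxS : x ∈ S) : c.φ x ∈ c.K := by
  have h : x ∈ S ∩ c.U := ⟨hxS, c.hx⟩
  rw [c.heq] at h
  exact h.2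

lemma mem_S_of_mem {z : Euc n} (hzV : z ∈ c.V) (hzK : z ∈ c.K) : c.ψ z ∈ S := by
  have h : c.ψ z ∈ c.U ∩ c.φ ⁻¹' (c.K : Set (Euc n)) := by
    refine ⟨c.hmψ hzV, ?_⟩
    rw [mem_preimage, c.hrl z hzV]; exact hzK
  rw [← c.heq] at h
  exact h.1

/-- Every vector of the straightening subspace is a velocity vector of a curve in `S`. -/
lemma curve_mem (hxS : x ∈ S) {k : Euc n} (hk : k ∈ c.K) : c.B k ∈ tangentSet S x := by
  obtain ⟨ε, hε, hball⟩ := Metric.isOpen_iff.1 c.hV _ c.hφV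
  set C : ℝ := ε / (‖k‖ + 1) with hC
  have hC0 : 0 < C := div_pos hε (by positivity)
  set θ : ℝ → ℝ := fun t => t / (1 + (t / C) ^ 2) with hθdef
  have hθsmall : ∀ t, ‖θ t • k‖ < ε := by
    intro t
    rw [norm_smul]
    have h1 : 0 < 1 + (t / C) ^ 2 := by positivity
    have habs : |θ t| ≤ C / 2 := by
      rw [hθdef]
      simp only
      rw [abs_div, abs_of_pos h1, div_le_iff₀ h1]
      have h2 : C / 2 * (1 + (t / C) ^ 2) = (C ^ 2 + t ^ 2) / (2 * C) := by
        field_simp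
      rw [h2, le_div_iff₀ (by positivity)]
      nlinarith [sq_nonneg (|t| - C), sq_abs t]
    have hkb : ‖k‖ < ‖k‖ + 1 := by linarith
    have : ‖θ t‖ * ‖k‖ ≤ (C / 2) * ‖k‖ := by
      have := norm_nonneg k
      exact mul_le_mul_of_nonneg_right (by simpa using habs) this
    refine lt_of_le_of_lt this ?_
    rw [hC, div_div, div_mul_eq_mul_div, div_lt_iff₀ (by positivity)]
    nlinarith [norm_nonneg k, hε]
  have hargK : ∀ t, c.φ x + θ t • k ∈ c.K := fun t =>
    c.K.add_mem (c.mem_K_of_mem hxS) (c.K.smul_mem _ hk)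
  have hargV : ∀ t, c.φ x + θ t • k ∈ c.V := by
    intro t
    apply hball
    rw [Metric.mem_ball, dist_eq_norm]
    simpa using hθsmall t
  have hθ0 : θ 0 = 0 := by simp [hθdef]
  refine ⟨fun t => c.ψ (c.φ x + θ t • k), fun t => c.mem_S_of_mem (hargV t) (hargK t), ?_, ?_⟩
  · show c.ψ (c.φ x + θ 0 • k) = x
    rw [hθ0]; simpa using c.hψφx
  · have hθd : HasDerivAt θ 1 0 := by
      have hden : HasDerivAt (fun t : ℝ => 1 + (t / C) ^ 2) 0 0 := by
        have h1 : HasDerivAt (fun t : ℝ => t / C) (1 / C) 0 := (hasDerivAt_id 0).div_const C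
        have h2 := (h1.pow 2).const_add 1
        norm_num at h2
        simpa using h2
      have h := (hasDerivAt_id (0 : ℝ)).div hden (by norm_num)
      norm_num at h
      exact h
    have hin : HasDerivAt (fun t => c.φ x + θ t • k) k 0 := by
      simpa using (hθd.smul_const k).const_add (c.φ x)
    have hB : HasFDerivAt c.ψ c.B (c.φ x + θ 0 • k) := by
      rw [hθ0]; simpa using c.hdB
    exact hB.comp_hasDerivAt 0 hin

theorem tangent_eq (hxS : x ∈ S) :
    tangentSpaceOf S x = c.K.map (c.B : Euc n →ₗ[ℝ] Euc n) := by
  apply le_antisymm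
  · rw [tangentSpaceOf, Submodule.span_le]
    rintro v ⟨γ, hγS, hγ0, hγd⟩
    have hAv : c.A v ∈ c.K := by
      have hcont : ContinuousAt γ 0 := hγd.continuousAt
      have hev : ∀ᶠ t in nhds (0 : ℝ), γ t ∈ c.U := hcont (c.hU.mem_nhds (hγ0 ▸ c.hx))
      have hδ : HasDerivAt (fun t => c.φ (γ t)) (c.A v) 0 := by
        have hA' : HasFDerivAt c.φ c.A (γ 0) := by rw [hγ0]; exact c.hdA
        exact hA'.comp_hasDerivAt 0 hγd
      have hslope := hasDerivAt_iff_tendsto_slope.1 hδ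
      have hK : IsClosed (c.K : Set (Euc n)) := Submodule.closed_of_finiteDimensional _
      refine hK.mem_of_tendsto hslope ?_
      refine eventually_nhdsWithin_of_eventually_nhds ?_
      filter_upwards [hev] with t ht
      have h1 : γ t ∈ S ∩ c.U := ⟨hγS t, ht⟩
      rw [c.heq] at h1
      have h2 : c.φ (γ t) ∈ c.K := h1.2
      have h0 : c.φ (γ 0) ∈ c.K := by rw [hγ0]; exact c.mem_K_of_mem hxS
      rw [slope_def_module]
      exact c.K.smul_mem _ (c.K.sub_mem h2 h0)
    exact Submodule.mem_map.2 ⟨c.A v, hAv, c.hBA' v⟩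
  · rintro v hv
    obtain ⟨k, hk, rfl⟩ := Submodule.mem_map.1 hv
    exact Submodule.subset_span (c.curve_mem hxS hk)

lemma finrank_tangent (hxS : x ∈ S) :
    finrank ℝ (tangentSpaceOf S x) = finrank ℝ c.K := by
  rw [c.tangent_eq hxS]
  have hinj : Function.Injective (c.B : Euc n →ₗ[ℝ] Euc n) := by
    intro u v h
    have : c.A (c.B u) = c.A (c.B v) := by simpa using congrArg c.A h
    rwa [c.hAB' u, c.hAB' v] at this
  exact ((Submodule.equivMapOfInjective _ hinj c.K).symm).finrank_eq

end Chart

lemma tangentSpaceOf_mono {S T : Set (Euc n)} (h : S ⊆ T) (x : Euc n) :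
    tangentSpaceOf S x ≤ tangentSpaceOf T x := by
  apply Submodule.span_mono
  rintro v ⟨γ, h1, h2, h3⟩
  exact ⟨γ, fun t => h (h1 t), h2, h3⟩

lemma fderiv_image_tangent {f : Euc p → Euc q} (hf : ContDiff ℝ (⊤ : ℕ∞) f)
    {M : Set (Euc p)} {N : Set (Euc q)} (hmaps : MapsTo f M N) (x : Euc p) :
    (tangentSpaceOf M x).map (fderiv ℝ f x : Euc p →ₗ[ℝ] Euc q) ≤ tangentSpaceOf N (f x) := by
  rw [tangentSpaceOf, Submodule.map_span, Submodule.span_le]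
  rintro w ⟨v, ⟨γ, h1, h2, h3⟩, rfl⟩
  apply Submodule.subset_span
  refine ⟨fun t => f (γ t), fun t => hmaps (h1 t), by show f (γ 0) = f x; rw [h2], ?_⟩
  have hd : HasFDerivAt f (fderiv ℝ f x) (γ 0) := by
    rw [h2]
    exact ((hf.differentiable (by simp)) x).hasFDerivAt
  exact hd.comp_hasDerivAt 0 h3


end Transversality

namespace Transversality

open Module Submodule

variable {n : ℕ}

/-- Inverse function theorem wrapper producing chart-style data. -/
lemma exists_localInverse {F : Euc n → Euc n} {U O : Set (Euc n)} {x : Euc n}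
    (hU : IsOpen U) (hx : x ∈ U) (hF : ContDiffOn ℝ (⊤ : ℕ∞) F U)
    (hbij : Function.Bijective (fderiv ℝ F x)) (hO : IsOpen O) (hxO : x ∈ O) :
    ∃ (U' V' : Set (Euc n)) (G : Euc n → Euc n),
      IsOpen U' ∧ IsOpen V' ∧ x ∈ U' ∧ F x ∈ V' ∧ U' ⊆ U ∩ O ∧
      ContDiffOn ℝ (⊤ : ℕ∞) G V' ∧ MapsTo F U' V' ∧ MapsTo G V' U' ∧
      (∀ y ∈ U', G (F y) = y) ∧ (∀ z ∈ V', F (G z) = z) := by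
  classical
  -- the invertible derivative at x as a continuous linear equiv
  have hFx : ContDiffAt ℝ (⊤ : ℕ∞) F x := hF.contDiffAt (hU.mem_nhds hx)
  have hdiff : DifferentiableAt ℝ F x := hFx.differentiableAt (by simp)
  set e : Euc n ≃L[ℝ] Euc n :=
    LinearEquiv.toContinuousLinearEquiv
      (LinearEquiv.ofBijective ((fderiv ℝ F x) : Euc n →ₗ[ℝ] Euc n) hbij) with he
  have hecoe : (e : Euc n →L[ℝ] Euc n) = fderiv ℝ F x := by
    apply ContinuousLinearMap.ext
    intro v
    rfl
  have hFx' : HasFDerivAt F ((e : Euc n →L[ℝ] Euc n)) x := by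
    rw [hecoe]; exact hdiff.hasFDerivAt
  -- partial homeomorph from the IFT
  set PH := hFx.toOpenPartialHomeomorph F hFx' (by simp) with hPH
  have hPHcoe : (PH : Euc n → Euc n) = F := ContDiffAt.toOpenPartialHomeomorph_coe hFx hFx' (by simp)
  have hxsrc : x ∈ PH.source := ContDiffAt.mem_toOpenPartialHomeomorph_source hFx hFx' (by simp)
  -- set where the derivative is invertible
  have hcont : ContinuousOn (fderiv ℝ F) U := hF.continuousOn_fderiv_of_isOpen hU hone
  have hUopen : IsOpen (U ∩ (fderiv ℝ F) ⁻¹' {T : Euc n →L[ℝ] Euc n | IsUnit T}) :=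
    hcont.isOpen_inter_preimage hU Units.isOpen
  set A := PH.source ∩ (U ∩ (fderiv ℝ F) ⁻¹' {T : Euc n →L[ℝ] Euc n | IsUnit T}) ∩ O with hA
  have hAopen : IsOpen A := (PH.open_source.inter hUopen).inter hO
  have hxA : x ∈ A := by
    refine ⟨⟨hxsrc, hx, ?_⟩, hxO⟩
    show IsUnit (fderiv ℝ F x)
    refine ⟨(ContinuousLinearEquiv.unitsEquiv ℝ (Euc n)).symm e, ?_⟩
    rw [← hecoe]; rfl
  set V' := PH.target ∩ PH.symm ⁻¹' A with hV'
  have hV'open : IsOpen V' :=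
    PH.symm.continuousOn.isOpen_inter_preimage PH.open_target hAopen
  refine ⟨A, V', PH.symm, hAopen, hV'open, hxA, ?_, ?_, ?_, ?_, ?_, ?_, ?_⟩
  · -- F x ∈ V'
    constructor
    · rw [← hPHcoe]; exact PH.map_source hxsrc
    · show PH.symm (F x) ∈ A
      rw [← hPHcoe, PH.left_inv hxsrc]; exact hxA
  · intro y hy; exact ⟨hy.1.2.1, hy.2⟩
  · -- smoothness of inverse
    intro z hz
    have hzt : z ∈ PH.target := hz.1
    have hzA : PH.symm z ∈ A := hz.2
    have hyU : PH.symm z ∈ U := hzA.1.2.1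
    have hyunit : IsUnit (fderiv ℝ F (PH.symm z)) := hzA.1.2.2
    obtain ⟨u, hu⟩ := hyunit
    set ez := ContinuousLinearEquiv.unitsEquiv ℝ (Euc n) u with hez
    have hezcoe : (ez : Euc n →L[ℝ] Euc n) = fderiv ℝ F (PH.symm z) := by rw [← hu]; rfl
    have hFz : ContDiffAt ℝ (⊤ : ℕ∞) F (PH.symm z) := hF.contDiffAt (hU.mem_nhds hyU)
    have hFz' : HasFDerivAt (PH : Euc n → Euc n) ((ez : Euc n →L[ℝ] Euc n)) (PH.symm z) := by
      rw [hPHcoe, hezcoe]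
      exact (hFz.differentiableAt (by simp)).hasFDerivAt
    have := PH.contDiffAt_symm hzt hFz' (by rw [hPHcoe]; exact hFz)
    exact this.contDiffWithinAt
  · -- MapsTo F A V'
    intro y hy
    have hysrc : y ∈ PH.source := hy.1.1
    constructor
    · rw [← hPHcoe]; exact PH.map_source hysrc
    · show PH.symm (F y) ∈ A
      rw [← hPHcoe, PH.left_inv hysrc]; exact hy
  · intro z hz; exact hz.2
  · intro y hy
    rw [← hPHcoe]
    exact PH.left_inv hy.1.1
  · intro z hz
    rw [← hPHcoe]
    exact PH.right_inv hz.1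


end Transversality

set_option maxHeartbeats 1000000

open Transversality in
theorem transversality_theorem' (a b m d s : ℕ) (M : Set (Euc a)) (N S : Set (Euc b))
    (f : Euc a → Euc b)
    (hM : IsSubmanifoldOfDim m M) (hN : IsSubmanifoldOfDim d N)
    (hSN : S ⊆ N) (hS : IsSubmanifoldOfDim s S)
    (hf : ContDiff ℝ (⊤ : ℕ∞) f) (hmaps : MapsTo f M N)
    (ht : ∀ x ∈ M, f x ∈ S →
      ∀ w ∈ tangentSpaceOf N (f x), ∃ u ∈ tangentSpaceOf S (f x),
        ∃ v ∈ tangentSpaceOf M x, w = u + fderiv ℝ f x v) :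
    IsSubmanifoldOfDim (m - (d - s)) {x ∈ M | f x ∈ S} := by
  classical
  rintro x₀ ⟨hx₀, hfx₀⟩
  obtain ⟨cM, hcM⟩ := exists_chart hM hx₀
  obtain ⟨cS, hcS⟩ := exists_chart hS hfx₀
  obtain ⟨cN, hcN⟩ := exists_chart hN (hSN hfx₀)
  set zS : Euc b := cS.φ (f x₀) with hzSdef
  set zN : Euc b := cN.φ (f x₀) with hzNdef
  set T : Euc b →L[ℝ] Euc b := cN.A.comp cS.B with hTdef
  set T' : Euc b →L[ℝ] Euc b := cS.A.comp cN.B with hT'def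
  have hT'T : ∀ v, T' (T v) = v := by
    intro v
    show cS.A (cN.B (cN.A (cS.B v))) = v
    rw [cN.hBA', cS.hAB']
  have hTT' : ∀ v, T (T' v) = v := by
    intro v
    show cN.A (cS.B (cS.A (cN.B v))) = v
    rw [cS.hBA', cN.hAB']
  -- tangent spaces
  have hTM : tangentSpaceOf M x₀ = cM.K.map (cM.B : Euc a →ₗ[ℝ] Euc a) := cM.tangent_eq hx₀
  have hTS : tangentSpaceOf S (f x₀) = cS.K.map (cS.B : Euc b →ₗ[ℝ] Euc b) :=
    cS.tangent_eq hfx₀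
  have hTN : tangentSpaceOf N (f x₀) = cN.K.map (cN.B : Euc b →ₗ[ℝ] Euc b) :=
    cN.tangent_eq (hSN hfx₀)
  set Ktil : Submodule ℝ (Euc b) :=
    (tangentSpaceOf S (f x₀)).map (cN.A : Euc b →ₗ[ℝ] Euc b) with hKtildef
  have hKt : Ktil = cS.K.map (T : Euc b →ₗ[ℝ] Euc b) := by
    rw [hKtildef, hTS, ← Submodule.map_comp]
    rfl
  have hKtilN : Ktil ≤ cN.K := by
    rintro v ⟨u, hu, rfl⟩
    have huN : u ∈ tangentSpaceOf N (f x₀) := tangentSpaceOf_mono hSN (f x₀) hu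
    rw [hTN] at huN
    obtain ⟨k, hk, rfl⟩ := huN
    have h1 : cN.A (cN.B k) = k := cN.hAB' k
    simpa [h1] using hk
  set W₁ : Submodule ℝ (Euc b) := Ktilᗮ ⊓ cN.K with hW₁def
  have hW₁N : W₁ ≤ cN.K := inf_le_right
  have hKtilorth : Ktil ≤ W₁ᗮ :=
    (Submodule.le_orthogonal_orthogonal Ktil).trans
      (Submodule.orthogonal_le (inf_le_left : W₁ ≤ Ktilᗮ))
  -- the straightening map F on the N-chart side
  set pSt : Euc b →L[ℝ] Euc b := projC Ktil with hpStdef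
  set pW : Euc b →L[ℝ] Euc b := projC W₁ with hpWdef
  set argm : Euc b → Euc b := fun u => zS + T' (pSt u) with hargmdef
  set Fm : Euc b → Euc b := fun u => cN.φ (cS.ψ (argm u)) + (u - pSt u) with hFmdef
  set Ω₀ : Set (Euc b) := argm ⁻¹' (cS.V ∩ cS.ψ ⁻¹' cN.U) with hΩ₀def
  have hargmcont : Continuous argm :=
    continuous_const.add (T'.continuous.comp pSt.continuous)
  have hΩ₀open : IsOpen Ω₀ :=
    (cS.hψ.continuousOn.isOpen_inter_preimage cS.hV cN.hU).preimage hargmcont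
  have hzSK : zS ∈ cS.K := cS.mem_K_of_mem hfx₀
  have harg0 : argm 0 = zS := by simp [hargmdef]
  have hψS0 : cS.ψ (argm 0) = f x₀ := by rw [harg0]; exact cS.hψφx
  have h0Ω₀ : (0 : Euc b) ∈ Ω₀ := by
    refine ⟨?_, ?_⟩
    · rw [harg0]; exact cS.hφV
    · show cS.ψ (argm 0) ∈ cN.U
      rw [hψS0]; exact cN.hx
  have hFmsm : ContDiffOn ℝ (⊤ : ℕ∞) Fm Ω₀ := by
    have h1 : ContDiffOn ℝ (⊤ : ℕ∞) argm Ω₀ :=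
      (contDiff_const.add (T'.contDiff.comp pSt.contDiff)).contDiffOn
    have h2 : ContDiffOn ℝ (⊤ : ℕ∞) (fun u => cS.ψ (argm u)) Ω₀ :=
      cS.hψ.comp h1 (fun u hu => hu.1)
    have h3 : ContDiffOn ℝ (⊤ : ℕ∞) (fun u => cN.φ (cS.ψ (argm u))) Ω₀ :=
      cN.hφ.comp h2 (fun u hu => hu.2)
    exact h3.add ((contDiff_id.sub pSt.contDiff).contDiffOn)
  have hargd : HasFDerivAt argm (T'.comp pSt) 0 := by
    exact ((T'.comp pSt).hasFDerivAt (x := (0 : Euc b))).const_add zS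
  have hFd1 : HasFDerivAt (fun u => cN.φ (cS.ψ (argm u)))
      (cN.A.comp (cS.B.comp (T'.comp pSt))) 0 := by
    have hdψ : HasFDerivAt cS.ψ cS.B (argm 0) := by rw [harg0]; exact cS.hdB
    have hdφ : HasFDerivAt cN.φ cN.A (cS.ψ (argm 0)) := by rw [hψS0]; exact cN.hdA
    exact hdφ.comp 0 (hdψ.comp 0 hargd)
  have hFd : HasFDerivAt Fm (ContinuousLinearMap.id ℝ (Euc b)) 0 := by
    have h2 : HasFDerivAt (fun u : Euc b => u - pSt u)
        (ContinuousLinearMap.id ℝ (Euc b) - pSt) 0 :=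
      (ContinuousLinearMap.id ℝ (Euc b) - pSt).hasFDerivAt
    have hsum := hFd1.add h2
    have heq : cN.A.comp (cS.B.comp (T'.comp pSt)) + (ContinuousLinearMap.id ℝ (Euc b) - pSt)
        = ContinuousLinearMap.id ℝ (Euc b) := by
      apply ContinuousLinearMap.ext
      intro v
      have : cN.A (cS.B (T' (pSt v))) = T (T' (pSt v)) := rfl
      simp only [ContinuousLinearMap.add_apply, ContinuousLinearMap.comp_apply,
        ContinuousLinearMap.sub_apply, ContinuousLinearMap.id_apply]
      rw [this, hTT']
      abel
    rw [← heq]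
    exact hsum
  have hFdbij : Function.Bijective (fderiv ℝ Fm 0) := by
    rw [hFd.fderiv]
    simpa using Function.bijective_id
  obtain ⟨Ω, Ω', Fsym, hΩopen, hΩ'open, h0Ω, hFm0Ω', hΩsub, hFsymsm, hmFm, hmFsym,
      hlinv, hrinv⟩ :=
    exists_localInverse hΩ₀open h0Ω₀ hFmsm hFdbij isOpen_univ (mem_univ _)
  have hFm0 : Fm 0 = zN := by
    show cN.φ (cS.ψ (argm 0)) + ((0 : Euc b) - pSt 0) = zN
    rw [hψS0]
    simp [hzNdef]
  have hzNΩ' : zN ∈ Ω' := hFm0 ▸ hFm0Ω'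
  -- the local defining function g
  set g : Euc a → Euc b := fun x => pW (Fsym (cN.φ (f x))) with hgdef
  set Og : Set (Euc a) := f ⁻¹' (cN.U ∩ cN.φ ⁻¹' Ω') with hOgdef
  have hOgopen : IsOpen Og :=
    (cN.hφ.continuousOn.isOpen_inter_preimage cN.hU hΩ'open).preimage hf.continuous
  have hx₀Og : x₀ ∈ Og := ⟨cN.hx, hzNΩ'⟩
  have hgsm : ContDiffOn ℝ (⊤ : ℕ∞) g Og := by
    have h1 : ContDiffOn ℝ (⊤ : ℕ∞) (fun x => cN.φ (f x)) Og :=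
      cN.hφ.comp hf.contDiffOn (fun x hx => hx.1)
    have h2 : ContDiffOn ℝ (⊤ : ℕ∞) (fun x => Fsym (cN.φ (f x))) Og :=
      hFsymsm.comp h1 (fun x hx => hx.2)
    exact pW.contDiff.comp_contDiffOn h2
  -- derivative of g
  have hdf : HasFDerivAt f (fderiv ℝ f x₀) x₀ := ((hf.differentiable (by simp)) x₀).hasFDerivAt
  have hdφN : HasFDerivAt (fun x => cN.φ (f x)) (cN.A.comp (fderiv ℝ f x₀)) x₀ :=
    cN.hdA.comp x₀ hdf
  have hFsymdiff : DifferentiableAt ℝ Fsym zN :=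
    (hFsymsm.contDiffAt (hΩ'open.mem_nhds hzNΩ')).differentiableAt (by simp)
  have hBsymid : fderiv ℝ Fsym zN = ContinuousLinearMap.id ℝ (Euc b) := by
    have hB : HasFDerivAt Fsym (fderiv ℝ Fsym zN) (Fm 0) := by
      rw [hFm0]; exact hFsymdiff.hasFDerivAt
    have hcomp := comp_fderiv_eq_id hΩopen h0Ω hlinv hFd hB
    simpa using hcomp
  set Dg : Euc a →L[ℝ] Euc b := pW.comp (cN.A.comp (fderiv ℝ f x₀)) with hDgdef
  have hgd : HasFDerivAt g Dg x₀ := by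
    have hdFsym : HasFDerivAt Fsym (fderiv ℝ Fsym zN) zN := hFsymdiff.hasFDerivAt
    have h1 : HasFDerivAt (fun x => Fsym (cN.φ (f x)))
        ((fderiv ℝ Fsym zN).comp (cN.A.comp (fderiv ℝ f x₀))) x₀ := hdFsym.comp x₀ hdφN
    have h2 := pW.hasFDerivAt.comp x₀ h1
    have h3 : pW.comp ((fderiv ℝ Fsym zN).comp (cN.A.comp (fderiv ℝ f x₀))) = Dg := by
      rw [hBsymid, ContinuousLinearMap.id_comp]
    rw [← h3]
    exact h2
  set D : Euc a →L[ℝ] Euc b := Dg.comp cM.B with hDdef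
  have hDgW₁ : ∀ v, Dg v ∈ W₁ := fun v => projC_mem _ _
  have hDW₁ : ∀ v, D v ∈ W₁ := fun v => projC_mem _ _
  -- surjectivity of D : K_M → W₁ from transversality
  have hsurj : ∀ w ∈ W₁, ∃ k ∈ cM.K, D k = w := by
    intro w hw
    have hwN : cN.B w ∈ tangentSpaceOf N (f x₀) := by
      rw [hTN]; exact Submodule.mem_map.2 ⟨w, hW₁N hw, rfl⟩
    obtain ⟨u, hu, vm, hvm, heqw⟩ := ht x₀ hx₀ hfx₀ (cN.B w) hwN
    rw [hTM] at hvm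
    obtain ⟨k, hk, rfl⟩ := hvm
    refine ⟨k, hk, ?_⟩
    have h4 := congrArg (fun z => pW (cN.A z)) heqw
    simp only [map_add] at h4
    have h1 : cN.A (cN.B w) = w := cN.hAB' w
    have h2 : pW w = w := projC_self hw
    have hAu : cN.A u ∈ Ktil := Submodule.mem_map.2 ⟨u, hu, rfl⟩
    have h3 : pW (cN.A u) = 0 := projC_zero (hKtilorth hAu)
    rw [h1, h2, h3, zero_add] at h4
    exact h4.symm
  set K0 : Submodule ℝ (Euc a) := cM.K ⊓ LinearMap.ker (D : Euc a →ₗ[ℝ] Euc b) with hK0def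
  have hK0le : K0 ≤ cM.K := inf_le_left
  set W' : Submodule ℝ (Euc a) := K0ᗮ ⊓ cM.K with hW'def
  have hW'KM : W' ≤ cM.K := inf_le_right
  have hW'K0o : W' ≤ K0ᗮ := inf_le_left
  -- the linear section ℓ : W₁ → W'
  set Dres : W' →ₗ[ℝ] W₁ :=
    LinearMap.codRestrict W₁ ((D : Euc a →ₗ[ℝ] Euc b).domRestrict W')
      (fun w => hDW₁ w) with hDresdef
  have hDresinj : Function.Injective Dres := by
    intro u v huv
    have h1 : D (u : Euc a) = D (v : Euc a) := congrArg Subtype.val huv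
    have h2 : ((u : Euc a) - v) ∈ LinearMap.ker (D : Euc a →ₗ[ℝ] Euc b) := by
      simp [LinearMap.mem_ker, map_sub, h1]
    have h3 : ((u : Euc a) - v) ∈ K0 :=
      ⟨cM.K.sub_mem (hW'KM u.2) (hW'KM v.2), h2⟩
    have h4 : ((u : Euc a) - v) ∈ K0ᗮ := K0ᗮ.sub_mem (hW'K0o u.2) (hW'K0o v.2)
    have h5 := (Submodule.orthogonal_disjoint K0).le_bot ⟨h3, h4⟩
    have h6 : (u : Euc a) = v := by
      have : (u : Euc a) - v = 0 := by simpa using h5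
      exact sub_eq_zero.1 this
    exact Subtype.ext h6
  have hsupM : K0 ⊔ W' = cM.K := Submodule.sup_orthogonal_inf_of_hasOrthogonalProjection hK0le
  have hDressurj : Function.Surjective Dres := by
    rintro ⟨w, hw⟩
    obtain ⟨k, hk, hDk⟩ := hsurj w hw
    rw [← hsupM] at hk
    obtain ⟨k0, hk0, w', hw', hsum⟩ := Submodule.mem_sup.1 hk
    refine ⟨⟨w', hw'⟩, ?_⟩
    apply Subtype.ext
    show D w' = w
    have hk00 : D k0 = 0 := hk0.2
    rw [← hDk, ← hsum, map_add, hk00, zero_add]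
  set ℓe : W' ≃ₗ[ℝ] W₁ := LinearEquiv.ofBijective Dres ⟨hDresinj, hDressurj⟩ with hℓedef
  set ℓ : Euc b →L[ℝ] Euc a :=
    LinearMap.toContinuousLinearMap
      (W'.subtype ∘ₗ (ℓe.symm : W₁ →ₗ[ℝ] W') ∘ₗ
        ((Submodule.orthogonalProjection W₁ : Euc b →L[ℝ] W₁) : Euc b →ₗ[ℝ] W₁)) with hℓdef
  have hℓW' : ∀ w, ℓ w ∈ W' := by
    intro w
    show ((ℓe.symm (Submodule.orthogonalProjection W₁ w)) : Euc a) ∈ W'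
    exact SetLike.coe_mem _
  have hDℓ : ∀ w ∈ W₁, D (ℓ w) = w := by
    intro w hw
    have hproj : Submodule.orthogonalProjection W₁ w = ⟨w, hw⟩ :=
      Subtype.ext (Submodule.starProjection_eq_self_iff.2 hw)
    have h1 : ℓ w = ((ℓe.symm ⟨w, hw⟩ : W') : Euc a) := by
      show ((ℓe.symm (Submodule.orthogonalProjection W₁ w)) : Euc a) = _
      rw [hproj]
    rw [h1]
    have h2 : D ((ℓe.symm ⟨w, hw⟩ : W') : Euc a) = ((Dres (ℓe.symm ⟨w, hw⟩)) : Euc b) := rfl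
    rw [h2]
    have h3 : Dres (ℓe.symm ⟨w, hw⟩) = ℓe (ℓe.symm ⟨w, hw⟩) := rfl
    rw [h3, LinearEquiv.apply_symm_apply]
  have hℓinj : ∀ w ∈ W₁, ℓ w = 0 → w = 0 := by
    intro w hw h0
    rw [← hDℓ w hw, h0, map_zero]
  -- final chart map
  set pW' : Euc a →L[ℝ] Euc a := projC W' with hpW'def
  set φf : Euc a → Euc a := fun x => cM.φ x - pW' (cM.φ x) + ℓ (g x) with hφfdef
  set Uf : Set (Euc a) := cM.U ∩ Og with hUfdef
  have hUfopen : IsOpen Uf := cM.hU.inter hOgopen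
  have hx₀Uf : x₀ ∈ Uf := ⟨cM.hx, hx₀Og⟩
  have hφfsm : ContDiffOn ℝ (⊤ : ℕ∞) φf Uf := by
    have h1 : ContDiffOn ℝ (⊤ : ℕ∞) cM.φ Uf := cM.hφ.mono inter_subset_left
    have h2 : ContDiffOn ℝ (⊤ : ℕ∞) (fun x => pW' (cM.φ x)) Uf :=
      pW'.contDiff.comp_contDiffOn h1
    have h3 : ContDiffOn ℝ (⊤ : ℕ∞) (fun x => ℓ (g x)) Uf :=
      ℓ.contDiff.comp_contDiffOn (hgsm.mono inter_subset_right)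
    exact (h1.sub h2).add h3
  set Dφ : Euc a →L[ℝ] Euc a := (cM.A - pW'.comp cM.A) + ℓ.comp Dg with hDφdef
  have hφfd : HasFDerivAt φf Dφ x₀ :=
    (cM.hdA.sub (pW'.hasFDerivAt.comp x₀ cM.hdA)).add (ℓ.hasFDerivAt.comp x₀ hgd)
  -- injectivity of the derivative
  have hDφ0 : ∀ v, Dφ v = 0 → v = 0 := by
    intro v hv
    have hvform : cM.A v - pW' (cM.A v) + ℓ (Dg v) = 0 := by
      simpa [hDφdef, ContinuousLinearMap.add_apply, ContinuousLinearMap.sub_apply,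
        ContinuousLinearMap.comp_apply] using hv
    have hkey := (key_iff K0 cM.K hK0le (cM.A v) (ℓ (Dg v)) (hℓW' (Dg v))).1
      (by rw [hvform]; exact K0.zero_mem)
    obtain ⟨hAvK, hℓ0⟩ := hkey
    have hDgv0 : Dg v = 0 := hℓinj _ (hDgW₁ v) hℓ0
    have hAvW' : cM.A v = pW' (cM.A v) := by
      rw [hℓ0, add_zero] at hvform
      exact (sub_eq_zero.1 hvform)
    have hAvmem : cM.A v ∈ W' := by rw [hAvW']; exact projC_mem _ _
    have hv' : v = cM.B (cM.A v) := (cM.hBA' v).symm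
    have hDAv : (cM.A v) ∈ LinearMap.ker (D : Euc a →ₗ[ℝ] Euc b) := by
      show D (cM.A v) = 0
      show Dg (cM.B (cM.A v)) = 0
      rw [← hv']
      exact hDgv0
    have hK0mem : cM.A v ∈ K0 := ⟨hW'KM hAvmem, hDAv⟩
    have h5 := (Submodule.orthogonal_disjoint K0).le_bot ⟨hK0mem, hW'K0o hAvmem⟩
    have h6 : cM.A v = 0 := by simpa using h5
    rw [hv', h6, map_zero]
  have hDφbij : Function.Bijective (⇑Dφ) := by
    have hinj : Function.Injective (⇑Dφ) := by
      intro u v huv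
      have := hDφ0 (u - v) (by rw [map_sub, huv, sub_self])
      exact sub_eq_zero.1 this
    exact ⟨hinj, LinearMap.injective_iff_surjective.1 hinj⟩
  -- the smallness conditions
  set O5 : Set (Euc b) := cS.U ∩ (fun y => T (cS.φ y - zS)) ⁻¹' Ω with hO5def
  have hO5open : IsOpen O5 :=
    ContinuousOn.isOpen_inter_preimage
      (T.continuous.comp_continuousOn (cS.hφ.continuousOn.sub continuousOn_const))
      cS.hU hΩopen
  have hfx₀O5 : f x₀ ∈ O5 := by
    refine ⟨cS.hx, ?_⟩
    show T (cS.φ (f x₀) - zS) ∈ Ω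
    rw [hzSdef]
    simpa using h0Ω
  set Oc : Set (Euc a) := Uf ∩ f ⁻¹' O5 with hOcdef
  have hOcopen : IsOpen Oc := hUfopen.inter (hO5open.preimage hf.continuous)
  have hx₀Oc : x₀ ∈ Oc := ⟨hx₀Uf, hfx₀O5⟩
  -- claim B (⇒) : on the good set, f x ∈ S implies g x = 0
  have claimB1 : ∀ x : Euc a, f x ∈ O5 → f x ∈ S → g x = 0 := by
    intro x hxO5 hfxS
    have hfxU : f x ∈ cS.U := hxO5.1
    have hk : cS.φ (f x) ∈ cS.K := by
      have h : f x ∈ S ∩ cS.U := ⟨hfxS, hfxU⟩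
      rw [cS.heq] at h
      exact h.2
    have huKtil : T (cS.φ (f x) - zS) ∈ Ktil := by
      rw [hKt]
      exact Submodule.mem_map.2 ⟨cS.φ (f x) - zS, cS.K.sub_mem hk hzSK, rfl⟩
    have hpu : pSt (T (cS.φ (f x) - zS)) = T (cS.φ (f x) - zS) := projC_self huKtil
    have hFmu : Fm (T (cS.φ (f x) - zS)) = cN.φ (f x) := by
      show cN.φ (cS.ψ (zS + T' (pSt (T (cS.φ (f x) - zS))))) +
        (T (cS.φ (f x) - zS) - pSt (T (cS.φ (f x) - zS))) = cN.φ (f x)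
      rw [hpu, hT'T]
      have h1 : zS + (cS.φ (f x) - zS) = cS.φ (f x) := by abel
      rw [h1, cS.hlr (f x) hfxU]
      simp
    have huΩ : T (cS.φ (f x) - zS) ∈ Ω := hxO5.2
    show pW (Fsym (cN.φ (f x))) = 0
    rw [← hFmu, hlinv _ huΩ]
    exact projC_zero (hKtilorth huKtil)
  -- claim B (⇐) : on the good set, for x ∈ M, g x = 0 implies f x ∈ S
  have claimB2 : ∀ x : Euc a, x ∈ Og → x ∈ M → g x = 0 → f x ∈ S := by
    intro x hxOg hxM hg0
    have hfxN : f x ∈ N := hmaps hxM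
    have hfxUN : f x ∈ cN.U := hxOg.1
    have hwK : cN.φ (f x) ∈ cN.K := by
      have h : f x ∈ N ∩ cN.U := ⟨hfxN, hfxUN⟩
      rw [cN.heq] at h
      exact h.2
    have hwΩ' : cN.φ (f x) ∈ Ω' := hxOg.2
    have huΩ : Fsym (cN.φ (f x)) ∈ Ω := hmFsym hwΩ'
    have huΩ₀ : Fsym (cN.φ (f x)) ∈ Ω₀ := (hΩsub huΩ).1
    have hFu : Fm (Fsym (cN.φ (f x))) = cN.φ (f x) := hrinv _ hwΩ'
    have hargK : argm (Fsym (cN.φ (f x))) ∈ cS.K := by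
      refine cS.K.add_mem hzSK ?_
      have hp : pSt (Fsym (cN.φ (f x))) ∈ Ktil := projC_mem _ _
      rw [hKt] at hp
      obtain ⟨ks, hks, hTks⟩ := Submodule.mem_map.1 hp
      have hTks' : T ks = pSt (Fsym (cN.φ (f x))) := hTks
      rw [← hTks', hT'T]
      exact hks
    have hargV : argm (Fsym (cN.φ (f x))) ∈ cS.V := huΩ₀.1
    have hψargU : cS.ψ (argm (Fsym (cN.φ (f x)))) ∈ cN.U := huΩ₀.2
    have hyS : cS.ψ (argm (Fsym (cN.φ (f x)))) ∈ S := cS.mem_S_of_mem hargV hargK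
    have hjK : cN.φ (cS.ψ (argm (Fsym (cN.φ (f x))))) ∈ cN.K := by
      have h : cS.ψ (argm (Fsym (cN.φ (f x)))) ∈ N ∩ cN.U := ⟨hSN hyS, hψargU⟩
      rw [cN.heq] at h
      exact h.2
    have hFueq : cN.φ (cS.ψ (argm (Fsym (cN.φ (f x))))) +
        (Fsym (cN.φ (f x)) - pSt (Fsym (cN.φ (f x)))) = cN.φ (f x) := hFu
    have hr : Fsym (cN.φ (f x)) - pSt (Fsym (cN.φ (f x)))
        = cN.φ (f x) - cN.φ (cS.ψ (argm (Fsym (cN.φ (f x))))) :=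
      eq_sub_of_add_eq' hFueq
    have hrW₁ : Fsym (cN.φ (f x)) - pSt (Fsym (cN.φ (f x))) ∈ W₁ := by
      refine ⟨sub_projC_mem _ _, ?_⟩
      rw [hr]
      exact cN.K.sub_mem hwK hjK
    have hpWu0 : pW (Fsym (cN.φ (f x))) = 0 := hg0
    have hr0 : Fsym (cN.φ (f x)) - pSt (Fsym (cN.φ (f x))) = 0 := by
      have h1 : pW (Fsym (cN.φ (f x)) - pSt (Fsym (cN.φ (f x))))
          = Fsym (cN.φ (f x)) - pSt (Fsym (cN.φ (f x))) := projC_self hrW₁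
      have h2 : pW (pSt (Fsym (cN.φ (f x)))) = 0 := projC_zero (hKtilorth (projC_mem _ _))
      have h3 : pW (Fsym (cN.φ (f x)) - pSt (Fsym (cN.φ (f x)))) = 0 := by
        rw [map_sub, hpWu0, h2, sub_zero]
      rw [← h1]
      exact h3
    have hw_eq : cN.φ (f x) = cN.φ (cS.ψ (argm (Fsym (cN.φ (f x))))) := by
      have := hFueq
      rw [hr0, add_zero] at this
      exact this.symm
    have hfx_eq : f x = cS.ψ (argm (Fsym (cN.φ (f x)))) := by
      have h1 : cN.ψ (cN.φ (f x)) = f x := cN.hlr (f x) hfxUN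
      have h2 : cN.ψ (cN.φ (cS.ψ (argm (Fsym (cN.φ (f x)))))) =
          cS.ψ (argm (Fsym (cN.φ (f x)))) := cN.hlr _ hψargU
      calc f x = cN.ψ (cN.φ (f x)) := h1.symm
        _ = cN.ψ (cN.φ (cS.ψ (argm (Fsym (cN.φ (f x)))))) := by rw [← hw_eq]
        _ = cS.ψ (argm (Fsym (cN.φ (f x)))) := h2
    rw [hfx_eq]
    exact hyS
  -- membership criterion for the final chart
  have hmemiff : ∀ x : Euc a, (φf x ∈ K0 ↔ (cM.φ x ∈ cM.K ∧ g x = 0)) := by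
    intro x
    have h1 := key_iff K0 cM.K hK0le (cM.φ x) (ℓ (g x)) (hℓW' (g x))
    constructor
    · intro h
      obtain ⟨hKM, hℓ0⟩ := h1.1 h
      exact ⟨hKM, hℓinj _ (projC_mem _ _) hℓ0⟩
    · rintro ⟨hKM, hg0⟩
      have := h1.2 ⟨hKM, by rw [hg0, map_zero]⟩
      have h2 : cM.φ x - projC (K0ᗮ ⊓ cM.K) (cM.φ x) + ℓ (g x) = φf x := rfl
      rw [h2] at this
      exact this
  -- apply the inverse function theorem to the final chart map
  obtain ⟨U, V, ψf, hUopen, hVopen, hx₀U, hφfx₀V, hUsub, hψfsm, hmφf, hmψf,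
      hlinvf, hrinvf⟩ :=
    exists_localInverse hUfopen hx₀Uf hφfsm (by rw [hφfd.fderiv]; exact hDφbij)
      hOcopen hx₀Oc
  -- dimension count
  have hsd : Module.finrank ℝ Ktil = s := by
    have h1 : Module.finrank ℝ (tangentSpaceOf S (f x₀)) = s := by
      rw [cS.finrank_tangent hfx₀]; exact hcS
    have hinj : Function.Injective ((cN.A : Euc b →ₗ[ℝ] Euc b)) := by
      intro u v h
      have h2 : cN.B (cN.A u) = cN.B (cN.A v) := by
        simpa using congrArg cN.B h
      rwa [cN.hBA', cN.hBA'] at h2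
    rw [hKtildef, ← h1]
    exact ((Submodule.equivMapOfInjective _ hinj _).symm).finrank_eq
  have hW₁rank : s + Module.finrank ℝ W₁ = d := by
    have h := Submodule.finrank_add_inf_finrank_orthogonal hKtilN
    rw [hsd, hcN] at h
    exact h
  have hW'rank : Module.finrank ℝ W' = Module.finrank ℝ W₁ := ℓe.finrank_eq
  have hK0rank : Module.finrank ℝ K0 + Module.finrank ℝ W' = m := by
    have h := Submodule.finrank_add_inf_finrank_orthogonal hK0le
    rw [hcM] at h
    exact h
  refine ⟨U, V, φf, ψf, K0, ?_, hUopen, hVopen, hx₀U,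
      hφfsm.mono (fun x hx => (hUsub hx).1), hψfsm, hmφf, hmψf, hlinvf, hrinvf, ?_⟩
  · omega
  · ext x
    simp only [Set.mem_inter_iff, Set.mem_setOf_eq, Set.mem_preimage, SetLike.mem_coe]
    constructor
    · rintro ⟨⟨hxM, hfxS⟩, hxU⟩
      refine ⟨hxU, ?_⟩
      have hxOc : x ∈ Oc := (hUsub hxU).2
      have hxUM : x ∈ cM.U := hxOc.1.1
      have hφK : cM.φ x ∈ cM.K := by
        have h : x ∈ M ∩ cM.U := ⟨hxM, hxUM⟩
        rw [cM.heq] at h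
        exact h.2
      exact (hmemiff x).2 ⟨hφK, claimB1 x hxOc.2 hfxS⟩
    · rintro ⟨hxU, hφfK⟩
      have hxOc : x ∈ Oc := (hUsub hxU).2
      obtain ⟨hφK, hg0⟩ := (hmemiff x).1 hφfK
      have hxM : x ∈ M := by
        have h : x ∈ cM.U ∩ cM.φ ⁻¹' (cM.K : Set (Euc a)) := ⟨hxOc.1.1, hφK⟩
        rw [← cM.heq] at h
        exact h.1
      exact ⟨⟨hxM, claimB2 x hxOc.1.2 hxM hg0⟩, hxU⟩

/-- **Thom's Transversality Theorem.** If a smooth map `f : M → N` is transverse to a smooth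
submanifold `S ⊂ N`, then `f⁻¹(S)` is a smooth submanifold of `M` whose codimension in `M`
equals the codimension of `S` in `N` (dimension `m - (d - s)`). -/
theorem transversality_theorem (a b m d s : ℕ) (M : Set (Euc a)) (N S : Set (Euc b))
    (f : Euc a → Euc b)
    (hM : IsSubmanifoldOfDim m M) (hN : IsSubmanifoldOfDim d N)
    (hSN : S ⊆ N) (hS : IsSubmanifoldOfDim s S)
    (hf : ContDiff ℝ (⊤ : ℕ∞) f) (hmaps : MapsTo f M N)
    (ht : TransverseOn f M N S) :
    IsSubmanifoldOfDim (m - (d - s)) {x ∈ M | f x ∈ S} := by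
  exact transversality_theorem' a b m d s M N S f hM hN hSN hS hf hmaps ht
end
end
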